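/- Let G=(V,E) be a single-source acyclic network with information rate ω, let t∈V be a non-source node with C_t≥ω, and let ρ∈R_t(δ_t) be an error pattern with |ρ|=rank_t(ρ)=δ_t. Then in the extended network G̃ there exist ω+δ_t channel-disjoint paths from In(s)∪ρ' to t, where ρ'={e' : e∈ρ}, such that: (1) exactly δ_t of the paths start from channels of ρ' and exactly ω of the paths start from the imaginary message channels of In(s); and (2) the δ_t paths from ρ' start with distinct channels of ρ', and each path starting with an imaginary error channel e'∈ρ' passes through the corresponding channel e∈ρ. -/

import Mathlib

open scoped BigOperators

/-- A single-source finite acyclic directed multigraph with unit-capacity channels.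
Acyclicity is witnessed by a rank function compatible with channel adjacency, and the
source node `s` has no incoming channels. -/
structure Network (V : Type*) (E : Type*) where
  tail : E → V
  head : E → V
  s : V
  no_in_source : ∀ e, head e ≠ s
  rk : E → ℕ
  acyclic : ∀ d e, head d = tail e → rk d < rk e

namespace Network

variable {V : Type*} {E : Type*}

/-- `p` is a nonempty directed path (a list of channels matching head-to-tail). -/
def IsPath (N : Network V E) (p : List E) : Prop :=
  p ≠ [] ∧ p.Chain' fun d e => N.head d = N.tail e

/-- `p` is a nonempty directed path starting at node `u`. -/
def PathFrom (N : Network V E) (p : List E) (u : V) : Prop :=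
  N.IsPath p ∧ ∀ e ∈ p.head?, N.tail e = u

variable [Fintype V] [Fintype E] [DecidableEq V] [DecidableEq E]

/-- `C` is a cut between the source and the collection `T` of nodes: after removing the
channels of `C` no directed path from the source reaches a node of `T`. -/
def IsCutNodes (N : Network V E) (C : Finset E) (T : Finset V) : Prop :=
  ∀ p : List E, N.PathFrom p N.s → (∃ e ∈ p.getLast?, N.head e ∈ T) → ∃ e ∈ p, e ∈ C

/-- The minimum cut capacity between the source and a collection `T` of nodes. -/
noncomputable def minCutNodes (N : Network V E) (T : Finset V) : ℕ :=
  sInf {n | ∃ C : Finset E, N.IsCutNodes C T ∧ C.card = n}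

/-- The minimum cut capacity `C_t` between the source and a node `t`. -/
noncomputable def minCutNode (N : Network V E) (t : V) : ℕ :=
  N.minCutNodes {t}

/-- `C` is a cut between the source and a collection `ξ` of channels (equivalently, a
cut between the source and the new nodes `n_e`, `e ∈ ξ`, in the network obtained by
subdividing every channel of `ξ`): every path from the source whose last channel lies
in `ξ` must meet `C`. -/
def IsCutChans (N : Network V E) (C : Finset E) (ξ : Finset E) : Prop :=
  ∀ p : List E, N.PathFrom p N.s → (∃ e ∈ p.getLast?, e ∈ ξ) → ∃ e ∈ p, e ∈ C

/-- The minimum cut capacity `C_ξ` between the source and a collection `ξ` of channels. -/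
noncomputable def minCutChans (N : Network V E) (ξ : Finset E) : ℕ :=
  sInf {n | ∃ C : Finset E, N.IsCutChans C ξ ∧ C.card = n}

end Network

set_option linter.unusedSectionVars false

namespace LNECAux

open Network List

variable {V : Type*} {E : Type*} [Fintype V] [Fintype E] [DecidableEq V] [DecidableEq E]
variable (M : Network V E)

noncomputable def degIn (F : Finset E) (v : V) : ℤ :=
  ((F.filter (fun e => M.head e = v)).card : ℤ)

noncomputable def degOut (F : Finset E) (v : V) : ℤ :=
  ((F.filter (fun e => M.tail e = v)).card : ℤ)

noncomputable def bal (F : Finset E) (v : V) : ℤ := degIn M F v - degOut M F v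

lemma degIn_s (F : Finset E) : degIn M F M.s = 0 := by
  unfold degIn
  rw [Finset.filter_false_of_mem, Finset.card_empty]
  · rfl
  · intro e _; exact M.no_in_source e

lemma degIn_insert {F : Finset E} {e : E} (he : e ∉ F) (v : V) :
    degIn M (insert e F) v = degIn M F v + (if M.head e = v then 1 else 0) := by
  unfold degIn
  rw [Finset.filter_insert]
  split
  · rw [Finset.card_insert_of_notMem (fun h => he (Finset.mem_filter.1 h).1)]
    push_cast; ring
  · simp

lemma degOut_insert {F : Finset E} {e : E} (he : e ∉ F) (v : V) :
    degOut M (insert e F) v = degOut M F v + (if M.tail e = v then 1 else 0) := by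
  unfold degOut
  rw [Finset.filter_insert]
  split
  · rw [Finset.card_insert_of_notMem (fun h => he (Finset.mem_filter.1 h).1)]
    push_cast; ring
  · simp

lemma degIn_erase {F : Finset E} {e : E} (he : e ∈ F) (v : V) :
    degIn M (F.erase e) v = degIn M F v - (if M.head e = v then 1 else 0) := by
  unfold degIn
  rw [Finset.filter_erase]
  split
  · rw [Finset.card_erase_of_mem (Finset.mem_filter.2 ⟨he, by assumption⟩)]
    have h1 : 0 < (F.filter (fun d => M.head d = v)).card :=
      Finset.card_pos.2 ⟨e, Finset.mem_filter.2 ⟨he, by assumption⟩⟩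
    push_cast [Nat.cast_sub (by omega : 1 ≤ (F.filter (fun d => M.head d = v)).card)]
    ring
  · rw [Finset.erase_eq_of_notMem (fun h => by exact absurd (Finset.mem_filter.1 h).2 (by assumption))]
    simp

lemma degOut_erase {F : Finset E} {e : E} (he : e ∈ F) (v : V) :
    degOut M (F.erase e) v = degOut M F v - (if M.tail e = v then 1 else 0) := by
  unfold degOut
  rw [Finset.filter_erase]
  split
  · rw [Finset.card_erase_of_mem (Finset.mem_filter.2 ⟨he, by assumption⟩)]
    have h1 : 0 < (F.filter (fun d => M.tail d = v)).card :=
      Finset.card_pos.2 ⟨e, Finset.mem_filter.2 ⟨he, by assumption⟩⟩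
    push_cast [Nat.cast_sub (by omega : 1 ≤ (F.filter (fun d => M.tail d = v)).card)]
    ring
  · rw [Finset.erase_eq_of_notMem (fun h => by exact absurd (Finset.mem_filter.1 h).2 (by assumption))]
    simp


/-- residual step relation -/
def RStep (F : Finset E) (u v : V) : Prop :=
  (∃ e, e ∉ F ∧ M.tail e = u ∧ M.head e = v) ∨ (∃ e, e ∈ F ∧ M.head e = u ∧ M.tail e = v)

def stSrc (x : E × Bool) : V := if x.2 then M.tail x.1 else M.head x.1
def stDst (x : E × Bool) : V := if x.2 then M.head x.1 else M.tail x.1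

noncomputable def tog (F : Finset E) (x : E × Bool) : Finset E :=
  if x.2 then insert x.1 F else F.erase x.1

lemma bal_tog {F : Finset E} {x : E × Bool} (hx : if x.2 then x.1 ∉ F else x.1 ∈ F) (v : V) :
    bal M (tog F x) v
      = bal M F v + (if stDst M x = v then 1 else 0) - (if stSrc M x = v then 1 else 0) := by
  rcases x with ⟨e, b⟩
  cases b with
  | true =>
      simp only [if_true] at hx
      simp only [tog, stSrc, stDst, if_true, bal]
      rw [degIn_insert M hx, degOut_insert M hx]; ring
  | false =>
      simp only [if_false] at hx
      simp only [tog, stSrc, stDst, if_false, bal, Bool.false_eq_true]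
      rw [degIn_erase M hx, degOut_erase M hx]; ring

lemma mem_tog_of_ne {F : Finset E} {x : E × Bool} {d : E} (hd : d ≠ x.1) :
    (d ∈ tog F x ↔ d ∈ F) := by
  rcases x with ⟨e, b⟩
  cases b <;> simp [tog, Finset.mem_erase, Finset.mem_insert, hd]

lemma aug (t : V) : ∀ (σ : List (E × Bool)) (F : Finset E) (u : V), σ ≠ [] →
    σ.Chain' (fun a b => stDst M a = stSrc M b) →
    (∀ x ∈ σ.head?, stSrc M x = u) →
    (∀ x ∈ σ.getLast?, stDst M x = t) →
    (∀ x ∈ σ, if x.2 then x.1 ∉ F else x.1 ∈ F) →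
    (σ.map Prod.fst).Nodup →
    ∃ F', ∀ v, bal M F' v
        = bal M F v + (if v = t then 1 else 0) - (if v = u then 1 else 0) := by
  intro σ
  induction σ with
  | nil => intro F u h; exact absurd rfl h
  | cons x rest ih =>
      intro F u _ hchain hhead hlast hmem hnody
      have hx : if x.2 then x.1 ∉ F else x.1 ∈ F := hmem x (List.mem_cons_self)
      have hu : stSrc M x = u := hhead x rfl
      cases rest with
      | nil =>
          refine ⟨tog F x, fun v => ?_⟩
          have ht : stDst M x = t := hlast x rfl
          have e1 := bal_tog M hx v
          rw [e1, hu, ht]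
          have h2 : (if t = v then (1:ℤ) else 0) = (if v = t then 1 else 0) := by simp [eq_comm]
          have h3 : (if u = v then (1:ℤ) else 0) = (if v = u then 1 else 0) := by simp [eq_comm]
          rw [h2, h3]
      | cons y rest' =>
          have hchain' : (y :: rest').Chain' (fun a b => stDst M a = stSrc M b) :=
            (List.isChain_cons.1 hchain).2
          have hlink : stDst M x = stSrc M y := by
            have := (List.isChain_cons.1 hchain).1
            exact this y rfl
          have hnody2 : (x.1 :: (y :: rest').map Prod.fst).Nodup := by simpa using hnody
          have hxnot : x.1 ∉ (y :: rest').map Prod.fst := (List.nodup_cons.1 hnody2).1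
          have hmem' : ∀ z ∈ (y :: rest'), if z.2 then z.1 ∉ tog F x else z.1 ∈ tog F x := by
            intro z hz
            have hzne : z.1 ≠ x.1 := by
              intro h
              exact hxnot (h ▸ List.mem_map_of_mem (f := Prod.fst) hz)
            have := hmem z (List.mem_cons_of_mem _ hz)
            rcases hb : z.2 <;> simp only [hb, if_true, if_false, Bool.false_eq_true] at this ⊢ <;>
              rw [mem_tog_of_ne hzne] <;> exact this
          have hnody' : ((y :: rest').map Prod.fst).Nodup := (List.nodup_cons.1 hnody2).2
          obtain ⟨F', hF'⟩ := ih (tog F x) (stSrc M y) (by simp) hchain'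
            (fun z hz => by cases hz; rfl) (fun z hz => hlast z (by simpa using hz)) hmem' hnody'
          refine ⟨F', fun v => ?_⟩
          have e1 := bal_tog M hx v
          rw [hF' v, e1, hu, hlink]
          have h2 : (if stSrc M y = v then (1:ℤ) else 0) = (if v = stSrc M y then 1 else 0) := by
            simp [eq_comm]
          have h3 : (if u = v then (1:ℤ) else 0) = (if v = u then 1 else 0) := by simp [eq_comm]
          rw [h2, h3]
          ring

lemma exists_walk_of_chain (F : Finset E) :
    ∀ (u : V) (l : List V), l.Chain (RStep M F) u →
    ∃ σ : List (E × Bool),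
      σ.Chain' (fun a b => stDst M a = stSrc M b) ∧
      σ.map (stSrc M) = (u :: l).dropLast ∧
      σ.map (stDst M) = l ∧
      (∀ x ∈ σ, if x.2 then x.1 ∉ F else x.1 ∈ F) := by
  intro u l
  induction l generalizing u with
  | nil => intro _; exact ⟨[], by simp [List.Chain'], by simp, by simp, by simp⟩
  | cons v l' ih =>
      intro hchain
      rw [List.Chain, List.isChain_cons_cons] at hchain
      obtain ⟨hstep, hchain'⟩ := hchain
      obtain ⟨σ', hc', hsrc', hdst', hmem'⟩ := ih v hchain'
      obtain (⟨e, he, het, heh⟩ | ⟨e, he, heh, het⟩) := hstep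
      · refine ⟨(e, true) :: σ', ?_, ?_, ?_, ?_⟩
        · rw [List.Chain', List.isChain_cons]
          refine ⟨fun y hy => ?_, hc'⟩
          have : stSrc M y = v := by
            have h1 : (σ'.map (stSrc M)).head? = some (stSrc M y) := by
              cases σ' with
              | nil => simp at hy
              | cons a b => simp at hy; simp [hy]
            rw [hsrc'] at h1
            cases l' with
            | nil =>
                have : σ' = [] := by
                  have := congrArg List.length hdst'; simpa using this
                rw [this] at hy; simp at hy
            | cons w l'' => simpa using h1.symm
          simp [stDst, heh, this]
        · simp only [List.map_cons, hsrc']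
          have : stSrc M (e, true) = u := by simp [stSrc, het]
          rw [this]
          cases l' <;> simp
        · simp only [List.map_cons, hdst']
          simp [stDst, heh]
        · intro x hx
          rcases List.mem_cons.1 hx with h | h
          · subst h; simpa using he
          · exact hmem' x h
      · refine ⟨(e, false) :: σ', ?_, ?_, ?_, ?_⟩
        · rw [List.Chain', List.isChain_cons]
          refine ⟨fun y hy => ?_, hc'⟩
          have : stSrc M y = v := by
            have h1 : (σ'.map (stSrc M)).head? = some (stSrc M y) := by
              cases σ' with
              | nil => simp at hy
              | cons a b => simp at hy; simp [hy]
            rw [hsrc'] at h1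
            cases l' with
            | nil =>
                have : σ' = [] := by
                  have := congrArg List.length hdst'; simpa using this
                rw [this] at hy; simp at hy
            | cons w l'' => simpa using h1.symm
          simp [stDst, het, this]
        · simp only [List.map_cons, hsrc']
          have : stSrc M (e, false) = u := by simp [stSrc, heh]
          rw [this]
          cases l' <;> simp
        · simp only [List.map_cons, hdst']
          simp [stDst, het]
        · intro x hx
          rcases List.mem_cons.1 hx with h | h
          · subst h; simpa using he
          · exact hmem' x h

lemma not_nodup_decomp {α : Type*} :
    ∀ (l : List α), ¬ l.Nodup → ∃ (x : α) (l₁ l₂ l₃ : List α), l = l₁ ++ x :: l₂ ++ x :: l₃ := by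
  intro l
  induction l with
  | nil => intro h; exact absurd List.nodup_nil h
  | cons y ys ih =>
      intro h
      by_cases hy : y ∈ ys
      · obtain ⟨s, t, rfl⟩ := List.append_of_mem hy
        exact ⟨y, [], s, t, by simp⟩
      · have : ¬ ys.Nodup := fun hn => h (List.nodup_cons.2 ⟨hy, hn⟩)
        obtain ⟨x, l₁, l₂, l₃, rfl⟩ := ih this
        exact ⟨x, y :: l₁, l₂, l₃, by simp⟩

lemma chain'_dedup {α : Type*} {r : α → α → Prop} :
    ∀ (n : ℕ) (l : List α), l.length ≤ n → l.Chain' r →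
    ∃ m : List α, m.Chain' r ∧ m.Nodup ∧ m.head? = l.head? ∧ m.getLast? = l.getLast? := by
  intro n
  induction n with
  | zero =>
      intro l hl _
      have : l = [] := List.length_eq_zero_iff.1 (Nat.le_zero.1 hl)
      exact ⟨[], by simp [this, List.Chain'], by simp, by simp [this], by simp [this]⟩
  | succ n ih =>
      intro l hl hc
      by_cases hnod : l.Nodup
      · exact ⟨l, hc, hnod, rfl, rfl⟩
      · obtain ⟨x, l₁, l₂, l₃, rfl⟩ := not_nodup_decomp l hnod
        have hc1 : (l₁ ++ x :: (l₂ ++ x :: l₃)).Chain' r := by simpa using hc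
        have h1 := (List.isChain_append.1 hc1)
        have hc2 : ((x :: l₂) ++ x :: l₃).Chain' r := by
          simpa [List.Chain'] using h1.2.1
        have hc3 : (x :: l₃).Chain' r := (List.isChain_append.1 hc2).2.1
        have hnew : (l₁ ++ x :: l₃).Chain' r := by
          rw [List.Chain', List.isChain_append]
          exact ⟨h1.1, hc3, fun a ha y hy => by
            apply h1.2.2 a ha
            simpa using hy⟩
        have hlen : (l₁ ++ x :: l₃).length ≤ n := by
          have := hl
          simp only [List.length_append, List.length_cons] at this ⊢
          omega
        obtain ⟨m, hmc, hmn, hh, hg⟩ := ih _ hlen hnew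
        refine ⟨m, hmc, hmn, ?_, ?_⟩
        · rw [hh]
          cases l₁ <;> simp
        · rw [hg, List.getLast?_append_cons, List.getLast?_append_cons]

def Reach (F : Finset E) (v : V) : Prop := Relation.ReflTransGen (RStep M F) M.s v

lemma reach_walk {F : Finset E} {t : V} (h : Reach M F t) (hts : t ≠ M.s) :
    ∃ σ : List (E × Bool), σ ≠ [] ∧
      σ.Chain' (fun a b => stDst M a = stSrc M b) ∧
      (∀ x ∈ σ.head?, stSrc M x = M.s) ∧
      (∀ x ∈ σ.getLast?, stDst M x = t) ∧
      (∀ x ∈ σ, if x.2 then x.1 ∉ F else x.1 ∈ F) ∧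
      (σ.map Prod.fst).Nodup := by
  obtain ⟨l, hchain, hlast⟩ := List.exists_isChain_cons_of_relationReflTransGen h
  have hgl : (M.s :: l).getLast? = some t := by
    rw [List.getLast?_eq_getLast_of_ne_nil (by simp)]
    exact congrArg some hlast
  have hc' : (M.s :: l).Chain' (RStep M F) := hchain
  obtain ⟨m, hmc, hmn, hh, hg⟩ := chain'_dedup (M.s :: l).length _ le_rfl hc'
  cases m with
  | nil => simp at hh
  | cons u m' =>
    have hu : u = M.s := by simpa using hh
    subst hu
    have hglm : (M.s :: m').getLast? = some t := hg.trans hgl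
    have hm' : m' ≠ [] := by
      intro h0
      subst h0
      simp at hglm
      exact hts hglm.symm
    have hglm' : m'.getLast? = some t := by
      rwa [show (M.s :: m') = [M.s] ++ m' from rfl,
        List.getLast?_append_of_ne_nil _ hm'] at hglm
    have hchainm : m'.Chain (RStep M F) M.s := hmc
    obtain ⟨σ, hc, hsrc, hdst, hmem⟩ := exists_walk_of_chain M F M.s m' hchainm
    have hσne : σ ≠ [] := by
      intro h0
      rw [h0] at hdst
      exact hm' hdst.symm
    have hdrop : (M.s :: m').dropLast = M.s :: m'.dropLast := by
      cases m' with
      | nil => exact absurd rfl hm'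
      | cons a b => rfl
    refine ⟨σ, hσne, hc, ?_, ?_, hmem, ?_⟩
    · intro x hx
      cases σ with
      | nil => simp at hx
      | cons a σ'' =>
          have hax : a = x := by simpa using hx
          subst hax
          rw [hdrop] at hsrc
          simpa using congrArg List.head? hsrc
    · intro x hx
      have h1 : (σ.map (stDst M)).getLast? = some (stDst M x) := by
        rw [List.getLast?_map]
        rw [show σ.getLast? = some x from hx]
        rfl
      rw [hdst, hglm'] at h1
      simpa using h1.symm
    · have hsrcnodup : (σ.map (stSrc M)).Nodup := by
        rw [hsrc]
        exact (List.dropLast_sublist _).nodup hmn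
      have hσnodup : σ.Nodup := hsrcnodup.of_map _
      refine List.Nodup.map_on ?_ hσnodup
      intro x hx y hy hfst
      by_cases hb : x.2 = y.2
      · exact Prod.ext hfst hb
      · exfalso
        have hmx := hmem x hx
        have hmy := hmem y hy
        cases hx2 : x.2 <;> cases hy2 : y.2 <;>
            rw [hx2] at hmx <;> rw [hy2] at hmy <;> simp at hmx hmy
        · exact hb (hx2.trans hy2.symm)
        · exact hmy (hfst ▸ hmx)
        · exact hmx (hfst ▸ hmy)
        · exact hb (hx2.trans hy2.symm)

lemma crossing (P : V → Prop) :
    ∀ (p : List E) (u : V), p ≠ [] → p.Chain' (fun d e => M.head d = M.tail e) →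
    (∀ x ∈ p.head?, M.tail x = u) → P u → (∀ x ∈ p.getLast?, ¬ P (M.head x)) →
    ∃ e ∈ p, P (M.tail e) ∧ ¬ P (M.head e) := by
  intro p
  induction p with
  | nil => intro u h; exact absurd rfl h
  | cons e rest ih =>
      intro u _ hchain hhead hPu hlast
      by_cases hPh : P (M.head e)
      · cases rest with
        | nil => exact absurd hPh (by simpa using hlast)
        | cons f rest' =>
            obtain ⟨d, hd, hcross⟩ := ih (M.head e) (by simp)
              (List.isChain_cons.1 hchain).2
              (fun x hx => ((List.isChain_cons.1 hchain).1 x hx).symm)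
              hPh (fun x hx => hlast x (by simpa using hx))
            exact ⟨d, List.mem_cons_of_mem _ hd, hcross⟩
      · exact ⟨e, List.mem_cons_self, by rw [hhead e rfl]; exact ⟨hPu, hPh⟩⟩

lemma reach_of_val_lt {F : Finset E} {t : V} (hts : t ≠ M.s)
    (hflow : ∀ v, v ≠ M.s → v ≠ t → bal M F v = 0) {k : ℕ}
    (hcut : ∀ C : Finset E, M.IsCutNodes C ({t} : Finset V) → k ≤ C.card)
    (hval : degOut M F M.s < (k : ℤ)) : Reach M F t := by
  classical
  by_contra hnr
  set C : Finset E := F.filter (fun e => Reach M F (M.tail e) ∧ ¬ Reach M F (M.head e)) with hC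
  have hcutC : M.IsCutNodes C ({t} : Finset V) := by
    intro p hp hlastt
    obtain ⟨⟨hpne, hpchain⟩, hphead⟩ := hp
    obtain ⟨e0, he0, he0t⟩ := hlastt
    have he0t' : M.head e0 = t := by simpa using he0t
    obtain ⟨e, he, hcr⟩ := crossing M (Reach M F) p M.s hpne hpchain hphead
      Relation.ReflTransGen.refl
      (by
        intro x hx
        have : x = e0 := by rw [hx] at he0; exact Option.some_injective _ he0
        rw [this, he0t']
        exact hnr)
    refine ⟨e, he, ?_⟩
    have heF : e ∈ F := by
      by_contra heF
      exact hcr.2 (hcr.1.trans (Relation.ReflTransGen.single (Or.inl ⟨e, heF, rfl, rfl⟩)))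
    rw [hC, Finset.mem_filter]
    exact ⟨heF, hcr⟩
  have hCk : (k : ℤ) ≤ C.card := by exact_mod_cast hcut C hcutC
  -- now count
  set R : Finset V := Finset.univ.filter (fun v => Reach M F v) with hR
  have hsR : M.s ∈ R := Finset.mem_filter.2 ⟨Finset.mem_univ _, Relation.ReflTransGen.refl⟩
  have htR : t ∉ R := by simp [hR]; exact hnr
  have hsum : ∑ v ∈ R, bal M F v = bal M F M.s := by
    refine Finset.sum_eq_single_of_mem _ hsR ?_
    intro v hv hvs
    refine hflow v hvs (fun h => htR (h ▸ hv))
  have hIn : ∑ v ∈ R, degIn M F v = ((F.filter (fun e => M.head e ∈ R)).card : ℤ) := by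
    rw [Finset.card_eq_sum_card_fiberwise
      (f := fun e => M.head e) (s := F.filter (fun e => M.head e ∈ R)) (t := R) (fun x hx => (Finset.mem_filter.1 hx).2)]
    push_cast
    refine Finset.sum_congr rfl ?_
    intro v hv
    have hset : (F.filter (fun e => M.head e ∈ R)).filter (fun x => M.head x = v)
        = F.filter (fun e => M.head e = v) := by
      rw [Finset.filter_filter]
      refine Finset.filter_congr ?_
      intro e _
      constructor
      · intro h; exact h.2
      · intro h; exact ⟨h ▸ hv, h⟩
    simp only [degIn]
    rw [hset]
  have hOut : ∑ v ∈ R, degOut M F v = ((F.filter (fun e => M.tail e ∈ R)).card : ℤ) := by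
    rw [Finset.card_eq_sum_card_fiberwise
      (f := fun e => M.tail e) (s := F.filter (fun e => M.tail e ∈ R)) (t := R) (fun x hx => (Finset.mem_filter.1 hx).2)]
    push_cast
    refine Finset.sum_congr rfl ?_
    intro v hv
    have hset : (F.filter (fun e => M.tail e ∈ R)).filter (fun x => M.tail x = v)
        = F.filter (fun e => M.tail e = v) := by
      rw [Finset.filter_filter]
      refine Finset.filter_congr ?_
      intro e _
      constructor
      · intro h; exact h.2
      · intro h; exact ⟨h ▸ hv, h⟩
    simp only [degOut]
    rw [hset]
  have hmemR : ∀ v, v ∈ R ↔ Reach M F v := by intro v; simp [hR]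
  have hback : ∀ e ∈ F, Reach M F (M.head e) → Reach M F (M.tail e) := by
    intro e he hr
    exact hr.trans (Relation.ReflTransGen.single (Or.inr ⟨e, he, rfl, rfl⟩))
  have hInEq : F.filter (fun e => M.head e ∈ R)
      = F.filter (fun e => M.tail e ∈ R ∧ M.head e ∈ R) := by
    refine Finset.filter_congr ?_
    intro e he
    constructor
    · intro h; exact ⟨(hmemR _).2 (hback e he ((hmemR _).1 h)), h⟩
    · intro h; exact h.2
  have hOutSplit : (F.filter (fun e => M.tail e ∈ R)).card
      = (F.filter (fun e => M.tail e ∈ R ∧ M.head e ∈ R)).card + C.card := by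
    have h1 := Finset.card_filter_add_card_filter_not
      (s := F.filter (fun e => M.tail e ∈ R)) (p := fun e => M.head e ∈ R)
    rw [Finset.filter_filter, Finset.filter_filter] at h1
    have h2 : F.filter (fun a => M.tail a ∈ R ∧ ¬ M.head a ∈ R) = C := by
      rw [hC]
      refine Finset.filter_congr ?_
      intro e _
      simp only [hmemR]
    rw [h2] at h1
    omega
  have hval2 : degOut M F M.s = (C.card : ℤ) := by
    have h1 : bal M F M.s =
        ((F.filter (fun e => M.head e ∈ R)).card : ℤ)
          - ((F.filter (fun e => M.tail e ∈ R)).card : ℤ) := by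
      rw [← hIn, ← hOut, ← Finset.sum_sub_distrib]
      exact hsum.symm
    rw [bal, degIn_s] at h1
    rw [hInEq] at h1
    rw [hOutSplit] at h1
    push_cast at h1
    omega
  omega

lemma augment {F : Finset E} {t : V} (hts : t ≠ M.s)
    (hflow : ∀ v, v ≠ M.s → v ≠ t → bal M F v = 0) {k : ℕ}
    (hcut : ∀ C : Finset E, M.IsCutNodes C ({t} : Finset V) → k ≤ C.card)
    (hval : degOut M F M.s < (k : ℤ)) :
    ∃ F' : Finset E, (∀ v, v ≠ M.s → v ≠ t → bal M F' v = 0) ∧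
      degOut M F' M.s = degOut M F M.s + 1 := by
  have hr := reach_of_val_lt M hts hflow hcut hval
  obtain ⟨σ, hne, hc, hh, hl, hm, hnd⟩ := reach_walk M hr hts
  obtain ⟨F', hF'⟩ := aug M t σ F M.s hne hc hh hl hm hnd
  refine ⟨F', ?_, ?_⟩
  · intro v hvs hvt
    rw [hF' v, hflow v hvs hvt, if_neg hvt, if_neg hvs]
    ring
  · have h1 := hF' M.s
    rw [if_neg (Ne.symm hts), if_pos rfl] at h1
    have h2 : bal M F' M.s = degIn M F' M.s - degOut M F' M.s := rfl
    have h3 : bal M F M.s = degIn M F M.s - degOut M F M.s := rfl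
    rw [h2, h3, degIn_s, degIn_s] at h1
    omega

lemma flow_exists {t : V} (hts : t ≠ M.s) {k : ℕ}
    (hcut : ∀ C : Finset E, M.IsCutNodes C ({t} : Finset V) → k ≤ C.card) :
    ∃ F : Finset E, (∀ v, v ≠ M.s → v ≠ t → bal M F v = 0) ∧
      degOut M F M.s = (k : ℤ) := by
  suffices h : ∀ m : ℕ, m ≤ k → ∃ F : Finset E,
      (∀ v, v ≠ M.s → v ≠ t → bal M F v = 0) ∧ degOut M F M.s = (m : ℤ) by
    exact h k le_rfl
  intro m
  induction m with
  | zero =>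
      intro _
      refine ⟨∅, fun v _ _ => by simp [bal, degIn, degOut], by simp [degOut]⟩
  | succ m ih =>
      intro hm
      obtain ⟨F, hflow, hvalF⟩ := ih (by omega)
      obtain ⟨F', hflow', hval'⟩ := augment M hts hflow hcut
        (by rw [hvalF]; exact_mod_cast Nat.lt_of_lt_of_le (Nat.lt_succ_self m) hm)
      exact ⟨F', hflow', by rw [hval', hvalF]; push_cast; ring⟩

lemma path_nodup {p : List E} (hc : p.Chain' (fun d e => M.head d = M.tail e)) : p.Nodup := by
  have h1 : (p.map M.rk).Chain' (· < ·) := by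
    rw [List.Chain', List.isChain_map]
    exact hc.imp (fun {a b} h => M.acyclic a b h)
  have h2 : (p.map M.rk).Pairwise (· < ·) := List.isChain_iff_pairwise.1 h1
  have h3 : (p.map M.rk).Nodup := h2.imp (fun h => Nat.ne_of_lt h)
  exact h3.of_map _

lemma measure_lt {d e : E} (h : M.head d = M.tail e) :
    (Finset.univ.filter (fun x => M.rk e < M.rk x)).card
      < (Finset.univ.filter (fun x => M.rk d < M.rk x)).card := by
  apply Finset.card_lt_card
  rw [Finset.ssubset_iff_of_subset]
  · exact ⟨e, by simp [M.acyclic d e h], by simp⟩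
  · intro x hx
    simp only [Finset.mem_filter, Finset.mem_univ, true_and] at hx ⊢
    exact lt_trans (M.acyclic d e h) hx

lemma walk_to_t {F : Finset E} {t : V}
    (hflow : ∀ v, v ≠ M.s → v ≠ t → bal M F v = 0) :
    ∀ (n : ℕ) (e : E), (Finset.univ.filter (fun x => M.rk e < M.rk x)).card ≤ n → e ∈ F →
    ∃ q : List E, q.head? = some e ∧ q.Chain' (fun d e => M.head d = M.tail e) ∧
      (∀ x ∈ q, x ∈ F) ∧ (∀ x ∈ q.getLast?, M.head x = t) := by
  intro n
  induction n with
  | zero =>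
      intro e hn he
      by_cases hht : M.head e = t
      · exact ⟨[e], rfl, by simp [List.Chain'], by simpa using he, by simpa using hht⟩
      · exfalso
        have hvs : M.head e ≠ M.s := M.no_in_source e
        have hbal := hflow (M.head e) hvs hht
        have hpos : 0 < degIn M F (M.head e) :=
          by
            have h0 : e ∈ F.filter (fun d => M.head d = M.head e) :=
              Finset.mem_filter.2 ⟨he, rfl⟩
            have := Finset.card_pos.2 ⟨e, h0⟩
            simp only [degIn]
            exact_mod_cast this
        have hout : 0 < degOut M F (M.head e) := by
          rw [bal] at hbal; omega
        obtain ⟨e2, he2⟩ : ∃ e2, e2 ∈ F.filter (fun d => M.tail d = M.head e) := by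
          simp only [degOut] at hout
          have : 0 < (F.filter (fun d => M.tail d = M.head e)).card := by exact_mod_cast hout
          exact Finset.card_pos.1 this
        have hlt := measure_lt M (Finset.mem_filter.1 he2).2.symm
        omega
  | succ n ih =>
      intro e hn he
      by_cases hht : M.head e = t
      · exact ⟨[e], rfl, by simp [List.Chain'], by simpa using he, by simpa using hht⟩
      · have hvs : M.head e ≠ M.s := M.no_in_source e
        have hbal := hflow (M.head e) hvs hht
        have hpos : 0 < degIn M F (M.head e) := by
          have h0 : e ∈ F.filter (fun d => M.head d = M.head e) :=
            Finset.mem_filter.2 ⟨he, rfl⟩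
          have := Finset.card_pos.2 ⟨e, h0⟩
          simp only [degIn]
          exact_mod_cast this
        have hout : 0 < degOut M F (M.head e) := by
          rw [bal] at hbal; omega
        obtain ⟨e2, he2⟩ : ∃ e2, e2 ∈ F.filter (fun d => M.tail d = M.head e) := by
          simp only [degOut] at hout
          have : 0 < (F.filter (fun d => M.tail d = M.head e)).card := by exact_mod_cast hout
          exact Finset.card_pos.1 this
        obtain ⟨he2F, he2t⟩ := Finset.mem_filter.1 he2
        have hlt := measure_lt M (he2t.symm)
        obtain ⟨q, hq1, hq2, hq3, hq4⟩ := ih e2 (by omega) he2F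
        cases q with
        | nil => simp at hq1
        | cons a q' =>
            have ha : a = e2 := by simpa using hq1
            subst ha
            refine ⟨e :: a :: q', rfl, ?_, ?_, ?_⟩
            · exact List.isChain_cons_cons.2 ⟨he2t.symm, hq2⟩
            · intro x hx
              rcases List.mem_cons.1 hx with h | h
              · exact h ▸ he
              · exact hq3 x h
            · intro x hx
              rw [List.getLast?_cons_cons] at hx
              exact hq4 x hx

lemma tele (v : V) :
    ∀ (q : List E), q ≠ [] → q.Chain' (fun d e => M.head d = M.tail e) →
    ∀ u w, (∀ x ∈ q.head?, M.tail x = u) → (∀ x ∈ q.getLast?, M.head x = w) →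
    ((q.filter (fun x => M.head x = v)).length : ℤ)
      - ((q.filter (fun x => M.tail x = v)).length : ℤ)
      = (if w = v then 1 else 0) - (if u = v then 1 else 0) := by
  intro q
  induction q with
  | nil => intro h; exact absurd rfl h
  | cons e rest ih =>
      intro _ hchain u w hhead hlast
      have hu : M.tail e = u := hhead e rfl
      cases rest with
      | nil =>
          have hw : M.head e = w := hlast e rfl
          subst hu hw
          simp only [List.filter_cons, List.filter_nil]
          by_cases h1 : M.head e = v <;> by_cases h2 : M.tail e = v <;>
            simp [h1, h2]
      | cons f rest' =>
          have hih := ih (by simp) (List.isChain_cons.1 hchain).2 (M.head e) w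
            (fun x hx => ((List.isChain_cons.1 hchain).1 x hx).symm)
            (fun x hx => hlast x (by simpa using hx))
          subst hu
          have hh1 : (((e :: f :: rest').filter (fun x => decide (M.head x = v))).length : ℤ)
              = (if M.head e = v then 1 else 0)
                + (((f :: rest').filter (fun x => decide (M.head x = v))).length : ℤ) := by
            rw [List.filter_cons]
            by_cases h : M.head e = v <;> simp [h] <;> ring
          have hh2 : (((e :: f :: rest').filter (fun x => decide (M.tail x = v))).length : ℤ)
              = (if M.tail e = v then 1 else 0)
                + (((f :: rest').filter (fun x => decide (M.tail x = v))).length : ℤ) := by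
            rw [List.filter_cons]
            by_cases h : M.tail e = v <;> simp [h] <;> ring
          rw [hh1, hh2]
          by_cases h1 : M.head e = v <;> by_cases h2 : M.tail e = v <;>
            by_cases h3 : w = v <;>
            simp only [h1, h2, h3, if_true, if_false, if_pos, if_neg, not_false_iff,
              eq_self_iff_true] at hih ⊢ <;> omega

lemma filter_sdiff_card {F Q : Finset E} (hQ : Q ⊆ F) (p : E → Prop) [DecidablePred p] :
    (((F \ Q).filter p).card : ℤ) = ((F.filter p).card : ℤ) - ((Q.filter p).card : ℤ) := by
  have h1 : (F \ Q).filter p = F.filter p \ Q.filter p := by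
    ext x
    simp only [Finset.mem_filter, Finset.mem_sdiff]
    tauto
  rw [h1, Finset.card_sdiff_of_subset (Finset.filter_subset_filter _ hQ)]
  have := Finset.card_le_card (Finset.filter_subset_filter p hQ)
  push_cast [Nat.cast_sub this]
  ring

lemma bal_sdiff {F Q : Finset E} (hQ : Q ⊆ F) (v : V) :
    bal M (F \ Q) v = bal M F v - bal M Q v := by
  simp only [bal, degIn, degOut]
  rw [filter_sdiff_card hQ, filter_sdiff_card hQ]
  ring

lemma degOut_sdiff {F Q : Finset E} (hQ : Q ⊆ F) (v : V) :
    degOut M (F \ Q) v = degOut M F v - degOut M Q v := by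
  simp only [degOut]
  rw [filter_sdiff_card hQ]

lemma deg_list {q : List E} (hnd : q.Nodup) (v : V) :
    degIn M q.toFinset v = ((q.filter (fun x => M.head x = v)).length : ℤ) ∧
    degOut M q.toFinset v = ((q.filter (fun x => M.tail x = v)).length : ℤ) := by
  constructor <;> simp only [degIn, degOut]
  · have h1 : q.toFinset.filter (fun e => M.head e = v)
        = (q.filter (fun x => decide (M.head x = v))).toFinset := by
      ext x
      simp [List.mem_filter]
    rw [h1, List.toFinset_card_of_nodup (hnd.filter _)]
  · have h1 : q.toFinset.filter (fun e => M.tail e = v)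
        = (q.filter (fun x => decide (M.tail x = v))).toFinset := by
      ext x
      simp [List.mem_filter]
    rw [h1, List.toFinset_card_of_nodup (hnd.filter _)]

lemma decompose {t : V} (hts : t ≠ M.s) : ∀ (k : ℕ) (F : Finset E),
    (∀ v, v ≠ M.s → v ≠ t → bal M F v = 0) → degOut M F M.s = (k : ℤ) →
    ∃ P : Fin k → List E,
      (∀ i, M.PathFrom (P i) M.s ∧ (∀ d ∈ (P i).getLast?, M.head d = t) ∧ ∀ x ∈ P i, x ∈ F) ∧
      (∀ i j, i ≠ j → ∀ d ∈ P i, d ∉ P j) := by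
  intro k
  induction k with
  | zero =>
      intro F _ _
      exact ⟨fun i => i.elim0, fun i => i.elim0, fun i => i.elim0⟩
  | succ k ih =>
      intro F hflow hval
      obtain ⟨e1, he1⟩ : ∃ e1, e1 ∈ F.filter (fun d => M.tail d = M.s) := by
        apply Finset.card_pos.1
        have : (0:ℤ) < degOut M F M.s := by rw [hval]; push_cast; omega
        simp only [degOut] at this
        exact_mod_cast this
      obtain ⟨he1F, he1s⟩ := Finset.mem_filter.1 he1
      obtain ⟨q, hq1, hq2, hq3, hq4⟩ := walk_to_t M hflow _ e1 le_rfl he1F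
      have hqne : q ≠ [] := by intro h; rw [h] at hq1; simp at hq1
      have hnd := path_nodup M hq2
      have hsub : q.toFinset ⊆ F := by
        intro x hx
        exact hq3 x (List.mem_toFinset.1 hx)
      have hhead : ∀ x ∈ q.head?, M.tail x = M.s := by
        intro x hx
        rw [hq1] at hx
        cases hx
        exact he1s
      have hbalq : ∀ v, bal M q.toFinset v
          = (if t = v then 1 else 0) - (if M.s = v then 1 else 0) := by
        intro v
        rw [bal, (deg_list M hnd v).1, (deg_list M hnd v).2]
        exact tele M v q hqne hq2 M.s t hhead hq4
      set F' := F \ q.toFinset with hF'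
      have hflow' : ∀ v, v ≠ M.s → v ≠ t → bal M F' v = 0 := by
        intro v hvs hvt
        rw [hF', bal_sdiff M hsub, hflow v hvs hvt, hbalq v,
          if_neg (fun h => hvt h.symm), if_neg (fun h => hvs h.symm)]
        ring
      have hval' : degOut M F' M.s = (k : ℤ) := by
        have hq_out : degOut M q.toFinset M.s = 1 := by
          have h1 := hbalq M.s
          have h2 : degIn M q.toFinset M.s = 0 := degIn_s M _
          rw [bal, h2, if_neg (fun h => hts h), if_pos rfl] at h1
          omega
        rw [hF', degOut_sdiff M hsub, hval, hq_out]
        push_cast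
        ring
      obtain ⟨P, hP, hdisj⟩ := ih F' hflow' hval'
      refine ⟨fun i => Fin.cases q P i, ?_, ?_⟩
      · intro i
        refine Fin.cases ?_ ?_ i
        · refine ⟨⟨⟨hqne, hq2⟩, hhead⟩, hq4, fun x hx => hq3 x hx⟩
        · intro j
          obtain ⟨h1, h2, h3⟩ := hP j
          exact ⟨h1, h2, fun x hx => (Finset.mem_sdiff.1 (h3 x hx)).1⟩
      · intro i j hij d
        induction i using Fin.cases with
        | zero =>
            induction j using Fin.cases with
            | zero => exact absurd rfl hij
            | succ j' =>
                simp only [Fin.cases_zero, Fin.cases_succ]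
                intro hd hd'
                have := (hP j').2.2 d hd'
                rw [hF', Finset.mem_sdiff] at this
                exact this.2 (List.mem_toFinset.2 hd)
        | succ i' =>
            induction j using Fin.cases with
            | zero =>
                simp only [Fin.cases_zero, Fin.cases_succ]
                intro hd hd'
                have := (hP i').2.2 d hd
                rw [hF', Finset.mem_sdiff] at this
                exact this.2 (List.mem_toFinset.2 hd')
            | succ j' =>
                simp only [Fin.cases_succ]
                exact hdisj i' j' (fun h => hij (congrArg Fin.succ h)) d

lemma menger {t : V} (hts : t ≠ M.s) {k : ℕ}
    (hcut : ∀ C : Finset E, M.IsCutNodes C ({t} : Finset V) → k ≤ C.card) :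
    ∃ P : Fin k → List E,
      (∀ i, M.PathFrom (P i) M.s ∧ (∀ d ∈ (P i).getLast?, M.head d = t)) ∧
      (∀ i j, i ≠ j → ∀ d ∈ P i, d ∉ P j) := by
  obtain ⟨F, hflow, hval⟩ := flow_exists M hts hcut
  obtain ⟨P, hP, hdisj⟩ := decompose M hts k F hflow hval
  exact ⟨P, fun i => ⟨(hP i).1, (hP i).2.1⟩, hdisj⟩

end LNECAux


section Codes

variable {V E : Type*} [Fintype V] [Fintype E] [DecidableEq V] [DecidableEq E]
variable (F : Type*) [Field F]

/-- `f` is the family of global encoding kernels of the `ω`-dimensional linear network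
code with local encoding coefficients `k` (between adjacent real channels) and `ks`
(from the `ω` imaginary message channels at the source): the kernels of the imaginary
message channels form the standard basis of `F^ω` and
`f_e = ∑_{d ∈ In(tail e)} k_{d,e} • f_d`. -/
def IsGlobalKernel (N : Network V E) (ω : ℕ) (k : E → E → F) (ks : Fin ω → E → F)
    (f : E → Fin ω → F) : Prop :=
  ∀ e, f e = (∑ d : E, if N.head d = N.tail e then k d e • f d else 0)
    + ∑ i : Fin ω, (if N.tail e = N.s then ks i e else 0) • (Pi.single i 1 : Fin ω → F)

/-- `f` is the family of extended global encoding kernels (coordinates indexed by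
`Fin ω ⊕ E`, i.e. by `In(s) ∪ E`) of the `ω`-dimensional linear network
error-correction code with local encoding coefficients `k`, `ks`:
`f̃_e = ∑_{d ∈ In(tail e)} k_{d,e} • f̃_d + 1_e`. -/
def IsExtKernel (N : Network V E) (ω : ℕ) (k : E → E → F) (ks : Fin ω → E → F)
    (f : E → (Fin ω ⊕ E) → F) : Prop :=
  ∀ e, f e = (∑ d : E, if N.head d = N.tail e then k d e • f d else 0)
    + (∑ i : Fin ω, (if N.tail e = N.s then ks i e else 0) • (Pi.single (Sum.inl i) 1 : (Fin ω ⊕ E) → F))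
    + (Pi.single (Sum.inr e) 1 : (Fin ω ⊕ E) → F)

variable {ω : ℕ}

/-- The row of the decoding matrix `F̃_T` of a collection `T` of nodes indexed by
`d ∈ In(s) ∪ E` (extended by zero outside the coordinates `In(T)`). -/
def rowT (N : Network V E) (f : E → (Fin ω ⊕ E) → F) (T : Finset V)
    (d : Fin ω ⊕ E) : E → F :=
  fun e => if N.head e ∈ T then f e d else 0

/-- The message space `Φ(T)` of a collection `T` of nodes. -/
def PhiT (N : Network V E) (f : E → (Fin ω ⊕ E) → F) (T : Finset V) :
    Submodule F (E → F) :=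
  Submodule.span F (Set.range fun i : Fin ω => rowT F N f T (Sum.inl i))

/-- The error space `Δ(T, ρ)` of an error pattern `ρ` with respect to `T`. -/
def DeltaT (N : Network V E) (f : E → (Fin ω ⊕ E) → F) (T : Finset V)
    (ρ : Finset E) : Submodule F (E → F) :=
  Submodule.span F ((fun e => rowT F N f T (Sum.inr e)) '' (ρ : Set E))

/-- The minimum distance `d_min^{(T)}` at a collection `T` of nodes. -/
noncomputable def dminT (N : Network V E) (f : E → (Fin ω ⊕ E) → F) (T : Finset V) : ℕ :=
  sInf {n | ∃ ρ : Finset E, ρ.card = n ∧ DeltaT F N f T ρ ⊓ PhiT F N f T ≠ ⊥}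

/-- `ρ₁ ≺_T ρ₂` : `Δ(T,ρ₁) ⊆ Δ(T,ρ₂)` for every `ω`-dimensional `F`-valued LNEC code
on the network. -/
def DominatesT (N : Network V E) (ω : ℕ) (T : Finset V) (ρ₁ ρ₂ : Finset E) : Prop :=
  ∀ (k : E → E → F) (ks : Fin ω → E → F) (f : E → (Fin ω ⊕ E) → F),
    IsExtKernel F N ω k ks f → DeltaT F N f T ρ₁ ≤ DeltaT F N f T ρ₂

/-- `rank_T(ρ)`, the rank of an error pattern with respect to `T`. -/
noncomputable def rankT (N : Network V E) (ω : ℕ) (T : Finset V) (ρ : Finset E) : ℕ :=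
  sInf {n | ∃ ρ' : Finset E, DominatesT F N ω T ρ ρ' ∧ ρ'.card = n}

/-- The row of the decoding matrix `F̃_ξ` of a collection `ξ` of channels indexed by
`d ∈ In(s) ∪ E` (extended by zero outside the coordinates `ξ`). -/
def rowX (N : Network V E) (f : E → (Fin ω ⊕ E) → F) (ξ : Finset E)
    (d : Fin ω ⊕ E) : E → F :=
  fun e => if e ∈ ξ then f e d else 0

/-- The message space `Φ(ξ)` of a collection `ξ` of channels. -/
def PhiX (N : Network V E) (f : E → (Fin ω ⊕ E) → F) (ξ : Finset E) :
    Submodule F (E → F) :=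
  Submodule.span F (Set.range fun i : Fin ω => rowX F N f ξ (Sum.inl i))

/-- The error space `Δ(ξ, ρ)` of an error pattern `ρ` with respect to `ξ`. -/
def DeltaX (N : Network V E) (f : E → (Fin ω ⊕ E) → F) (ξ : Finset E)
    (ρ : Finset E) : Submodule F (E → F) :=
  Submodule.span F ((fun e => rowX F N f ξ (Sum.inr e)) '' (ρ : Set E))

/-- The minimum distance `d_min^{(ξ)}` at a collection `ξ` of channels. -/
noncomputable def dminX (N : Network V E) (f : E → (Fin ω ⊕ E) → F) (ξ : Finset E) : ℕ :=
  sInf {n | ∃ ρ : Finset E, ρ.card = n ∧ DeltaX F N f ξ ρ ⊓ PhiX F N f ξ ≠ ⊥}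

/-- `ρ₁ ≺_ξ ρ₂` : `Δ(ξ,ρ₁) ⊆ Δ(ξ,ρ₂)` for every `ω`-dimensional `F`-valued LNEC code
on the network. -/
def DominatesX (N : Network V E) (ω : ℕ) (ξ : Finset E) (ρ₁ ρ₂ : Finset E) : Prop :=
  ∀ (k : E → E → F) (ks : Fin ω → E → F) (f : E → (Fin ω ⊕ E) → F),
    IsExtKernel F N ω k ks f → DeltaX F N f ξ ρ₁ ≤ DeltaX F N f ξ ρ₂

/-- `rank_ξ(ρ)`, the rank of an error pattern with respect to `ξ`. -/
noncomputable def rankX (N : Network V E) (ω : ℕ) (ξ : Finset E) (ρ : Finset E) : ℕ :=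
  sInf {n | ∃ ρ' : Finset E, DominatesX F N ω ξ ρ ρ' ∧ ρ'.card = n}

/-- Regular LNEC code: `dim Φ(t) = ω` for every non-source node with `C_t ≥ ω`. -/
def Regular (N : Network V E) (f : E → (Fin ω ⊕ E) → F) : Prop :=
  ∀ t : V, t ≠ N.s → ω ≤ N.minCutNode t →
    Module.finrank F (PhiT F N f ({t} : Finset V)) = ω

/-- Strongly regular LNEC code: `dim Φ(t) = min{ω, C_t}` for every non-source node. -/
def StronglyRegular (N : Network V E) (f : E → (Fin ω ⊕ E) → F) : Prop :=
  ∀ t : V, t ≠ N.s →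
    Module.finrank F (PhiT F N f ({t} : Finset V)) = min ω (N.minCutNode t)

/-- Strongly sup-regular LNEC code: `dim Φ(T) = min{ω, C_T}` for every nonempty
collection of non-source nodes. -/
def StronglySupRegular (N : Network V E) (f : E → (Fin ω ⊕ E) → F) : Prop :=
  ∀ T : Finset V, T.Nonempty → N.s ∉ T →
    Module.finrank F (PhiT F N f T) = min ω (N.minCutNodes T)

/-- Channel-regular LNEC code: `dim Φ(ξ) = min{ω, C_ξ}` for every nonempty collection
of channels. -/
def ChannelRegular (N : Network V E) (f : E → (Fin ω ⊕ E) → F) : Prop :=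
  ∀ ξ : Finset E, ξ.Nonempty →
    Module.finrank F (PhiX F N f ξ) = min ω (N.minCutChans ξ)

/-- LNEC multicast MDS code. -/
def IsMulticastMDS (N : Network V E) (f : E → (Fin ω ⊕ E) → F) : Prop :=
  Regular F N f ∧ ∀ t : V, t ≠ N.s → ω ≤ N.minCutNode t →
    dminT F N f {t} = N.minCutNode t - ω + 1

/-- LNEC broadcast MDS code. -/
def IsBroadcastMDS (N : Network V E) (f : E → (Fin ω ⊕ E) → F) : Prop :=
  StronglyRegular F N f ∧ ∀ t : V, t ≠ N.s →
    (ω ≤ N.minCutNode t → dminT F N f {t} = N.minCutNode t - ω + 1) ∧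
    (N.minCutNode t < ω → dminT F N f {t} = 1)

/-- LNEC dispersion MDS code. -/
def IsDispersionMDS (N : Network V E) (f : E → (Fin ω ⊕ E) → F) : Prop :=
  StronglySupRegular F N f ∧ ∀ T : Finset V, T.Nonempty → N.s ∉ T →
    (ω ≤ N.minCutNodes T → dminT F N f T = N.minCutNodes T - ω + 1) ∧
    (N.minCutNodes T < ω → dminT F N f T = 1)

/-- LNEC generic MDS code. -/
def IsGenericMDS (N : Network V E) (f : E → (Fin ω ⊕ E) → F) : Prop :=
  ChannelRegular F N f ∧ ∀ ξ : Finset E, ξ.Nonempty →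
    (ω ≤ N.minCutChans ξ → dminX F N f ξ = N.minCutChans ξ - ω + 1) ∧
    (N.minCutChans ξ < ω → dminX F N f ξ = 1)

/-- `R_t(δ_t)`: the set of error patterns `ρ` with `|ρ| = rank_t(ρ) = δ_t`. -/
def Rset (N : Network V E) (ω : ℕ) (t : V) : Set (Finset E) :=
  {ρ | ρ.card = N.minCutNode t - ω ∧ rankT F N ω ({t} : Finset V) ρ = N.minCutNode t - ω}

end Codes

namespace LNECAux2

open Network List

variable {V E : Type*} [Fintype V] [Fintype E] [DecidableEq V] [DecidableEq E]
variable {Fc : Type*} [Field Fc]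
variable {N : Network V E} {ω : ℕ} {k : E → E → Fc} {ks : Fin ω → E → Fc}
variable {f : E → (Fin ω ⊕ E) → Fc}

lemma ext_eval (hf : IsExtKernel Fc N ω k ks f) (h g : E) :
    f h (Sum.inr g) = (∑ d : E, if N.head d = N.tail h then k d h * f d (Sum.inr g) else 0)
      + (if h = g then 1 else 0) := by
  have h0 := congrFun (hf h) (Sum.inr g)
  rw [Pi.add_apply, Pi.add_apply, Finset.sum_apply, Finset.sum_apply] at h0
  have h1 : ∀ d : E, (if N.head d = N.tail h then k d h • f d else 0) (Sum.inr g)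
      = if N.head d = N.tail h then k d h * f d (Sum.inr g) else 0 := by
    intro d
    by_cases hc : N.head d = N.tail h <;> simp [hc]
  have h2 : ∀ i : Fin ω,
      ((if N.tail h = N.s then ks i h else 0) • (Pi.single (Sum.inl i) 1 : (Fin ω ⊕ E) → Fc))
        (Sum.inr g) = 0 := by
    intro i
    rw [Pi.smul_apply, Pi.single_eq_of_ne (by simp)]
    simp
  have h3 : (Pi.single (Sum.inr h) 1 : (Fin ω ⊕ E) → Fc) (Sum.inr g)
      = (if h = g then 1 else 0) := by
    rw [Pi.single_apply]
    by_cases hc : h = g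
    · simp [hc]
    · rw [if_neg (by simpa using (Ne.symm hc)), if_neg hc]
  rw [Finset.sum_congr rfl (fun d _ => h1 d), Finset.sum_congr rfl (fun i _ => h2 i),
    h3, Finset.sum_const_zero] at h0
  simpa using h0

lemma kernel_zero (hf : IsExtKernel Fc N ω k ks f) :
    ∀ (n : ℕ) (h : E), N.rk h ≤ n → ∀ g, N.rk h < N.rk g → f h (Sum.inr g) = 0 := by
  intro n
  induction n with
  | zero =>
      intro h hn g hg
      rw [ext_eval hf h g, if_neg (fun hc => by subst hc; omega)]
      rw [Finset.sum_eq_zero, zero_add]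
      intro d _
      rw [if_neg]
      intro hc
      have := N.acyclic d h hc
      omega
  | succ n ih =>
      intro h hn g hg
      rw [ext_eval hf h g, if_neg (fun hc => by subst hc; omega)]
      rw [Finset.sum_eq_zero, zero_add]
      intro d _
      by_cases hc : N.head d = N.tail h
      · have hlt := N.acyclic d h hc
        rw [if_pos hc, ih d (by omega) g (by omega), mul_zero]
      · rw [if_neg hc]

lemma kernel_diag (hf : IsExtKernel Fc N ω k ks f) (h : E) : f h (Sum.inr h) = 1 := by
  rw [ext_eval hf h h, if_pos rfl]
  rw [Finset.sum_eq_zero, zero_add]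
  intro d _
  by_cases hc : N.head d = N.tail h
  · rw [if_pos hc, kernel_zero hf (N.rk d) d le_rfl h (N.acyclic d h hc), mul_zero]
  · rw [if_neg hc]

lemma kernel_forward (hf : IsExtKernel Fc N ω k ks f) (e : E) :
    ∀ (n : ℕ) (h : E), N.rk h ≤ n → h ≠ e →
    f h (Sum.inr e) = ∑ g : E, if N.head e = N.tail g then k e g * f h (Sum.inr g) else 0 := by
  intro n
  induction n with
  | zero =>
      intro h hn hne
      have hL : (∑ d : E, if N.head d = N.tail h then k d h * f d (Sum.inr e) else 0) = 0 := by
        apply Finset.sum_eq_zero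
        intro d _
        by_cases hc : N.head d = N.tail h
        · exact absurd (N.acyclic d h hc) (by omega)
        · rw [if_neg hc]
      have hR : (∑ g : E, if N.head e = N.tail g then k e g * f h (Sum.inr g) else 0) = 0 := by
        apply Finset.sum_eq_zero
        intro g _
        by_cases hc : N.head e = N.tail g
        · rw [if_pos hc,
            kernel_zero hf (N.rk h) h le_rfl g (by have := N.acyclic e g hc; omega), mul_zero]
        · rw [if_neg hc]
      rw [ext_eval hf h e, if_neg hne, hL, hR]
      simp
  | succ n ih =>
      intro h hn hne
      have key : ∀ d : E, (if N.head d = N.tail h then k d h * f d (Sum.inr e) else 0)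
          = (∑ g : E, if N.head e = N.tail g ∧ N.head d = N.tail h
              then k d h * (k e g * f d (Sum.inr g)) else 0)
            + (if d = e ∧ N.head e = N.tail h then k e h else 0) := by
        intro d
        by_cases hde : d = e
        · subst hde
          have hsum0 : (∑ g : E, if N.head d = N.tail g ∧ N.head d = N.tail h
              then k d h * (k d g * f d (Sum.inr g)) else 0) = 0 := by
            apply Finset.sum_eq_zero
            intro g _
            by_cases hc : N.head d = N.tail g ∧ N.head d = N.tail h
            · rw [if_pos hc, kernel_zero hf (N.rk d) d le_rfl g (N.acyclic d g hc.1),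
                mul_zero, mul_zero]
            · rw [if_neg hc]
          rw [hsum0, zero_add, kernel_diag hf]
          by_cases hc : N.head d = N.tail h
          · rw [if_pos hc, if_pos ⟨rfl, hc⟩, mul_one]
          · rw [if_neg hc, if_neg (fun hx : d = d ∧ _ => hc hx.2)]
        · rw [if_neg (fun hx : d = e ∧ _ => hde hx.1), add_zero]
          by_cases hc : N.head d = N.tail h
          · rw [if_pos hc]
            have hdr : N.rk d ≤ n := by have := N.acyclic d h hc; omega
            rw [ih d hdr hde, Finset.mul_sum]
            apply Finset.sum_congr rfl
            intro g _
            by_cases hc2 : N.head e = N.tail g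
            · rw [if_pos hc2, if_pos ⟨hc2, hc⟩]
            · rw [if_neg hc2, mul_zero, if_neg (fun hx : _ ∧ _ => hc2 hx.1)]
          · rw [if_neg hc]
            symm
            apply Finset.sum_eq_zero
            intro g _
            exact if_neg (fun hx : _ ∧ _ => hc hx.2)
      have key2 : ∀ g : E, (if N.head e = N.tail g then k e g * f h (Sum.inr g) else 0)
          = (∑ d : E, if N.head e = N.tail g ∧ N.head d = N.tail h
              then k e g * (k d h * f d (Sum.inr g)) else 0)
            + (if g = h ∧ N.head e = N.tail h then k e h else 0) := by
        intro g
        by_cases hc : N.head e = N.tail g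
        · rw [if_pos hc, ext_eval hf h g, mul_add, Finset.mul_sum]
          congr 1
          · apply Finset.sum_congr rfl
            intro d _
            by_cases hc2 : N.head d = N.tail h
            · rw [if_pos hc2, if_pos ⟨hc, hc2⟩]
            · rw [if_neg hc2, mul_zero, if_neg (fun hx : _ ∧ _ => hc2 hx.2)]
          · by_cases hgh : g = h
            · subst hgh
              rw [if_pos rfl, mul_one, if_pos ⟨rfl, hc⟩]
            · rw [if_neg (fun hx => hgh hx.symm), mul_zero,
                if_neg (fun hx : _ ∧ _ => hgh hx.1)]
        · rw [if_neg hc]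
          symm
          rw [if_neg (fun hx : _ ∧ _ => hc (by rw [hx.1]; exact hx.2)), add_zero]
          apply Finset.sum_eq_zero
          intro d _
          exact if_neg (fun hx : _ ∧ _ => hc hx.1)
      have hstep1 : f h (Sum.inr e)
          = ∑ d : E, (if N.head d = N.tail h then k d h * f d (Sum.inr e) else 0) := by
        rw [ext_eval hf h e, if_neg hne, add_zero]
      rw [hstep1, Finset.sum_congr rfl (fun d _ => key d), Finset.sum_add_distrib]
      conv_rhs => rw [Finset.sum_congr rfl (fun g _ => key2 g), Finset.sum_add_distrib]
      congr 1
      · rw [Finset.sum_comm]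
        apply Finset.sum_congr rfl
        intro g _
        apply Finset.sum_congr rfl
        intro d _
        by_cases hc : N.head e = N.tail g ∧ N.head d = N.tail h
        · rw [if_pos hc, if_pos hc]
          ring
        · rw [if_neg hc, if_neg hc]
      · have hA : (∑ d : E, if d = e ∧ N.head e = N.tail h then k e h else 0)
            = (if N.head e = N.tail h then k e h else 0) := by
          rw [Finset.sum_congr rfl
            (fun d _ => show (if d = e ∧ N.head e = N.tail h then k e h else 0)
              = (if d = e then (if N.head e = N.tail h then k e h else 0) else 0) by
                by_cases h1 : d = e <;> by_cases h2 : N.head e = N.tail h <;>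
                  simp [h1, h2])]
          rw [Finset.sum_ite_eq' Finset.univ e
            (fun _ => if N.head e = N.tail h then k e h else 0)]
          simp
        have hB : (∑ g : E, if g = h ∧ N.head e = N.tail h then k e h else 0)
            = (if N.head e = N.tail h then k e h else 0) := by
          rw [Finset.sum_congr rfl
            (fun g _ => show (if g = h ∧ N.head e = N.tail h then k e h else 0)
              = (if g = h then (if N.head e = N.tail h then k e h else 0) else 0) by
                by_cases h1 : g = h <;> by_cases h2 : N.head e = N.tail h <;>
                  simp [h1, h2])]
          rw [Finset.sum_ite_eq' Finset.univ h
            (fun _ => if N.head e = N.tail h then k e h else 0)]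
          simp
        rw [hA, hB]

lemma row_identity (hf : IsExtKernel Fc N ω k ks f) (t : V) (e : E) (hht : N.head e ≠ t) :
    rowT Fc N f ({t} : Finset V) (Sum.inr e)
      = ∑ g : E, (if N.head e = N.tail g then k e g else 0) •
          rowT Fc N f ({t} : Finset V) (Sum.inr g) := by
  funext x
  rw [Finset.sum_apply]
  simp only [rowT]
  by_cases hx : N.head x ∈ ({t} : Finset V)
  · rw [if_pos hx]
    have hxe : x ≠ e := fun hh => hht (by rw [← hh]; simpa using hx)
    rw [kernel_forward hf e (N.rk x) x le_rfl hxe]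
    apply Finset.sum_congr rfl
    intro g _
    simp only [Pi.smul_apply, rowT]
    rw [if_pos hx]
    by_cases hc : N.head e = N.tail g
    · rw [if_pos hc, if_pos hc, smul_eq_mul]
    · rw [if_neg hc, if_neg hc, zero_smul]
  · rw [if_neg hx]
    symm
    apply Finset.sum_eq_zero
    intro g _
    simp only [Pi.smul_apply, rowT]
    rw [if_neg hx, smul_zero]

lemma row_mem (hf : IsExtKernel Fc N ω k ks f) (t : V) (D : Finset E) :
    ∀ (n : ℕ) (e : E), (Finset.univ.filter (fun d => N.rk e < N.rk d)).card ≤ n →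
    (∀ q : List E, N.IsPath q → q.head? = some e →
      (∀ x ∈ q.getLast?, N.head x = t) → ∃ x ∈ q, x ∈ D) →
    rowT Fc N f ({t} : Finset V) (Sum.inr e) ∈ DeltaT Fc N f ({t} : Finset V) D := by
  intro n
  induction n with
  | zero =>
      intro e hn hcut
      by_cases heD : e ∈ D
      · exact Submodule.subset_span ⟨e, by simpa using heD, rfl⟩
      · have hht : N.head e ≠ t := by
          intro hh
          obtain ⟨x, hx1, hx2⟩ := hcut [e] ⟨by simp, by simp [List.Chain']⟩ rfl
            (by intro x hx; cases hx; exact hh)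
          have hxe : x = e := by simpa using hx1
          exact heD (hxe ▸ hx2)
        rw [row_identity hf t e hht]
        apply Submodule.sum_mem
        intro g _
        by_cases hc : N.head e = N.tail g
        · exfalso
          have : g ∈ Finset.univ.filter (fun d => N.rk e < N.rk d) := by
            simp [N.acyclic e g hc]
          have := Finset.card_pos.2 ⟨g, this⟩
          omega
        · rw [if_neg hc, zero_smul]
          exact Submodule.zero_mem _
  | succ n ih =>
      intro e hn hcut
      by_cases heD : e ∈ D
      · exact Submodule.subset_span ⟨e, by simpa using heD, rfl⟩
      · have hht : N.head e ≠ t := by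
          intro hh
          obtain ⟨x, hx1, hx2⟩ := hcut [e] ⟨by simp, by simp [List.Chain']⟩ rfl
            (by intro x hx; cases hx; exact hh)
          have hxe : x = e := by simpa using hx1
          exact heD (hxe ▸ hx2)
        rw [row_identity hf t e hht]
        apply Submodule.sum_mem
        intro g _
        by_cases hc : N.head e = N.tail g
        · apply Submodule.smul_mem
          apply ih g ?_ ?_
          · have hlt := LNECAux.measure_lt N hc
            omega
          · intro q hq hqh hql
            have hchain : (e :: q).Chain' (fun d e => N.head d = N.tail e) := by
              rw [List.Chain', List.isChain_cons]
              refine ⟨?_, hq.2⟩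
              intro y hy
              rw [hqh] at hy
              cases hy
              exact hc
            have hlast : ∀ x ∈ (e :: q).getLast?, N.head x = t := by
              rw [show e :: q = [e] ++ q from rfl,
                List.getLast?_append_of_ne_nil _ hq.1]
              exact hql
            obtain ⟨x, hx1, hx2⟩ := hcut (e :: q) ⟨by simp, hchain⟩ rfl hlast
            rcases List.mem_cons.1 hx1 with hxe | hxq
            · exact absurd (hxe ▸ hx2) heD
            · exact ⟨x, hxq, hx2⟩
        · rw [if_neg hc, zero_smul]
          exact Submodule.zero_mem _

lemma rank_le_of_cut {t : V} {ρ D : Finset E}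
    (hρcut : ∀ e ∈ ρ, ∀ q : List E, N.IsPath q → q.head? = some e →
      (∀ x ∈ q.getLast?, N.head x = t) → ∃ x ∈ q, x ∈ D) :
    rankT Fc N ω ({t} : Finset V) ρ ≤ D.card := by
  apply Nat.sInf_le
  refine ⟨D, ?_, rfl⟩
  intro k ks f hf
  rw [DeltaT, Submodule.span_le]
  rintro _ ⟨e, he, rfl⟩
  exact row_mem hf t D _ e le_rfl (hρcut e he)

end LNECAux2

namespace LNECAux3

open Network List

variable {V E : Type*} [Fintype V] [Fintype E] [DecidableEq V] [DecidableEq E]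

def star (N : Network V E) (ρ : Finset E) (ω : ℕ) : Network (Option V) (E ⊕ Fin ω) where
  tail x := Sum.elim (fun e => if e ∈ ρ then none else some (N.tail e)) (fun _ => none) x
  head x := Sum.elim (fun e => some (N.head e)) (fun _ => some N.s) x
  s := none
  no_in_source := by rintro (e | i) <;> simp
  rk x := Sum.elim (fun e => N.rk e + 1) (fun _ => 0) x
  acyclic := by
    rintro (a | i) (b | j) h <;> simp only [Sum.elim_inl, Sum.elim_inr] at h ⊢
    · by_cases hb : b ∈ ρ
      · rw [if_pos hb] at h
        exact absurd h (by simp)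
      · rw [if_neg hb] at h
        have := N.acyclic a b (Option.some_injective _ h)
        omega
    · exact absurd h (by simp)
    · by_cases hb : b ∈ ρ
      · rw [if_pos hb] at h
        exact absurd h (by simp)
      · omega
    · exact absurd h (by simp)

variable {N : Network V E} {ρ : Finset E} {ω : ℕ}

lemma star_tail_inl (e : E) :
    (star N ρ ω).tail (Sum.inl e) = if e ∈ ρ then none else some (N.tail e) := rfl

lemma star_head_inl (e : E) : (star N ρ ω).head (Sum.inl e) = some (N.head e) := rfl

/-- lift a path of `N` avoiding `ρ` except possibly at its first channel (which must
then be in `ρ`), to a path of the star network. -/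
lemma lift_path {q : List E} (hq : q.Chain' (fun d e => N.head d = N.tail e))
    (hne : q ≠ []) (hrest : ∀ x ∈ q.tail, x ∉ ρ) :
    (q.map Sum.inl : List (E ⊕ Fin ω)).Chain'
      (fun d e => (star N ρ ω).head d = (star N ρ ω).tail e) := by
  rw [List.Chain', List.isChain_map]
  induction q with
  | nil => simp
  | cons a rest ih =>
      rw [List.isChain_cons]
      constructor
      · intro y hy
        have hyρ : y ∉ ρ := by
          apply hrest
          exact List.mem_of_mem_head? hy
        rw [star_head_inl, star_tail_inl, if_neg hyρ]
        have := (List.isChain_cons.1 hq).1 y hy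
        rw [this]
      · cases rest with
        | nil => simp
        | cons b rest' =>
            apply ih (List.isChain_cons.1 hq).2 (by simp)
            intro x hx
            exact hrest x (List.mem_cons_of_mem _ hx)

/-- split a list at the last occurrence of an element of `ρ` -/
lemma split_last_rho : ∀ (q : List E), (∃ x ∈ q, x ∈ ρ) →
    ∃ (q₁ q₂ : List E) (e₂ : E), q = q₁ ++ e₂ :: q₂ ∧ e₂ ∈ ρ ∧ ∀ x ∈ q₂, x ∉ ρ := by
  intro q
  induction q with
  | nil => rintro ⟨x, hx, _⟩; simp at hx
  | cons a rest ih =>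
      intro hex
      by_cases hr : ∃ x ∈ rest, x ∈ ρ
      · obtain ⟨q₁, q₂, e₂, h1, h2, h3⟩ := ih hr
        exact ⟨a :: q₁, q₂, e₂, by rw [h1]; rfl, h2, h3⟩
      · obtain ⟨x, hx, hxρ⟩ := hex
        have hxa : x = a := by
          rcases List.mem_cons.1 hx with h | h
          · exact h
          · exact absurd ⟨x, h, hxρ⟩ hr
        subst hxa
        exact ⟨[], rest, x, rfl, hxρ, fun y hy => fun hyρ => hr ⟨y, hy, hyρ⟩⟩

lemma star_cut_bound {t : V} (ht : t ≠ N.s) {δ : ℕ}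
    (hrk : ∀ D : Finset E, (∀ e ∈ ρ, ∀ q : List E, N.IsPath q → q.head? = some e →
        (∀ x ∈ q.getLast?, N.head x = t) → ∃ x ∈ q, x ∈ D) → δ ≤ D.card)
    (hNcut : ∀ C : Finset E, N.IsCutNodes C ({t} : Finset V) → ω + δ ≤ C.card) :
    ∀ Cs : Finset (E ⊕ Fin ω),
      (star N ρ ω).IsCutNodes Cs ({some t} : Finset (Option V)) → ω + δ ≤ Cs.card := by
  intro Cs hCs
  classical
  set BR : Finset E := Finset.univ.filter (fun e => Sum.inl e ∈ Cs) with hBR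
  have hBRsub : BR.image Sum.inl ⊆ Cs := by
    intro z hz
    obtain ⟨e, he, rfl⟩ := Finset.mem_image.1 hz
    exact (Finset.mem_filter.1 he).2
  have hrho : ∀ q : List E, q.Chain' (fun d e => N.head d = N.tail e) →
      (∃ x ∈ q, x ∈ ρ) → (∀ x ∈ q.getLast?, N.head x = t) → ∃ x ∈ q, x ∈ BR := by
    intro q hc hex hlast
    obtain ⟨q₁, q₂, e₂, rfl, he₂, hq₂⟩ := split_last_rho _ hex
    have hc' : (e₂ :: q₂).Chain' (fun d e => N.head d = N.tail e) :=
      (List.isChain_append.1 (by simpa [List.Chain'] using hc)).2.1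
    have hlift := lift_path (ω := ω) hc' (by simp) (by simpa using hq₂)
    have hpf : (star N ρ ω).PathFrom ((e₂ :: q₂).map Sum.inl) (star N ρ ω).s := by
      refine ⟨⟨by simp, hlift⟩, ?_⟩
      intro z hz
      have : z = Sum.inl e₂ := by symm; simpa using hz
      subst this
      rw [star_tail_inl, if_pos he₂]
      rfl
    have hlastq : (e₂ :: q₂).getLast? = (q₁ ++ e₂ :: q₂).getLast? :=
      (List.getLast?_append_cons q₁ e₂ q₂).symm
    have hlast' : ∃ z ∈ ((e₂ :: q₂).map Sum.inl).getLast?,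
        (star N ρ ω).head z ∈ ({some t} : Finset (Option V)) := by
      obtain ⟨y, hy⟩ : ∃ y, (e₂ :: q₂).getLast? = some y :=
        ⟨_, List.getLast?_eq_getLast_of_ne_nil (by simp)⟩
      refine ⟨Sum.inl y, ?_, ?_⟩
      · rw [List.getLast?_map, hy]
        rfl
      · have := hlast y (by rw [← hlastq]; exact hy)
        rw [star_head_inl, this]
        simp
    obtain ⟨z, hz1, hz2⟩ := hCs _ hpf hlast'
    obtain ⟨x, hx, rfl⟩ := List.mem_map.1 hz1
    exact ⟨x, List.mem_append_right q₁ hx, Finset.mem_filter.2 ⟨Finset.mem_univ _, hz2⟩⟩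
  by_cases hP : ∀ i : Fin ω, Sum.inr i ∈ Cs
  · have hBRδ : δ ≤ BR.card := by
      apply hrk BR
      intro e he q hq hqh hql
      exact hrho q hq.2 ⟨e, List.mem_of_mem_head? (by rw [hqh]; rfl), he⟩ hql
    have himg : (Finset.univ.image (Sum.inr : Fin ω → E ⊕ Fin ω)) ⊆ Cs := by
      intro z hz
      obtain ⟨i, _, rfl⟩ := Finset.mem_image.1 hz
      exact hP i
    have hdisj : Disjoint (BR.image Sum.inl)
        (Finset.univ.image (Sum.inr : Fin ω → E ⊕ Fin ω)) := by
      rw [Finset.disjoint_left]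
      rintro z hz1 hz2
      obtain ⟨e, _, rfl⟩ := Finset.mem_image.1 hz1
      obtain ⟨i, _, h⟩ := Finset.mem_image.1 hz2
      exact absurd h (by simp)
    have hunion : BR.image Sum.inl ∪ Finset.univ.image Sum.inr ⊆ Cs :=
      Finset.union_subset hBRsub himg
    have hcard := Finset.card_le_card hunion
    rw [Finset.card_union_of_disjoint hdisj,
      Finset.card_image_of_injective _ Sum.inl_injective,
      Finset.card_image_of_injective _ Sum.inr_injective] at hcard
    simp only [Finset.card_univ, Fintype.card_fin] at hcard
    omega
  · push_neg at hP
    obtain ⟨i, hi⟩ := hP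
    have hBRcut : N.IsCutNodes BR ({t} : Finset V) := by
      intro p hp hlastEx
      have hlast : ∀ x ∈ p.getLast?, N.head x = t := by
        obtain ⟨e0, he0, he0t⟩ := hlastEx
        intro x hx
        have hxe : x = e0 := by
          rw [he0] at hx
          symm; simpa using hx
        subst hxe
        simpa using he0t
      by_cases hex : ∃ x ∈ p, x ∈ ρ
      · exact hrho p hp.1.2 hex hlast
      · push_neg at hex
        have hlift := lift_path (ω := ω) hp.1.2 hp.1.1 (fun x hx => hex x (List.mem_of_mem_tail hx))
        obtain ⟨p₀, prest, rfl⟩ : ∃ p₀ prest, p = p₀ :: prest := by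
          cases p with
          | nil => exact absurd rfl hp.1.1
          | cons a b => exact ⟨a, b, rfl⟩
        have hchain : ((Sum.inr i :: (p₀ :: prest).map Sum.inl) : List (E ⊕ Fin ω)).Chain'
            (fun d e => (star N ρ ω).head d = (star N ρ ω).tail e) := by
          rw [List.Chain', List.isChain_cons]
          refine ⟨?_, hlift⟩
          intro z hz
          have : z = Sum.inl p₀ := by symm; simpa using hz
          subst this
          rw [star_tail_inl, if_neg (hex p₀ (List.mem_cons_self))]
          show some N.s = some (N.tail p₀)
          rw [hp.2 p₀ rfl]
        have hpf : (star N ρ ω).PathFrom (Sum.inr i :: (p₀ :: prest).map Sum.inl)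
            (star N ρ ω).s := by
          refine ⟨⟨by simp, hchain⟩, ?_⟩
          intro z hz
          have : z = Sum.inr i := by symm; simpa using hz
          subst this
          rfl
        have hlast' : ∃ z ∈ (Sum.inr i :: (p₀ :: prest).map Sum.inl).getLast?,
            (star N ρ ω).head z ∈ ({some t} : Finset (Option V)) := by
          obtain ⟨y, hy⟩ : ∃ y, (p₀ :: prest).getLast? = some y :=
            ⟨_, List.getLast?_eq_getLast_of_ne_nil (by simp)⟩
          refine ⟨Sum.inl y, ?_, ?_⟩
          · rw [show (Sum.inr i :: (p₀ :: prest).map Sum.inl : List (E ⊕ Fin ω))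
                = [Sum.inr i] ++ (p₀ :: prest).map Sum.inl from rfl,
              List.getLast?_append_of_ne_nil _ (by simp), List.getLast?_map, hy]
            rfl
          · rw [star_head_inl, hlast y hy]
            simp
        obtain ⟨z, hz1, hz2⟩ := hCs _ hpf hlast'
        rcases List.mem_cons.1 hz1 with hzi | hzm
        · exact absurd (hzi ▸ hz2) hi
        · obtain ⟨x, hx, rfl⟩ := List.mem_map.1 hzm
          exact ⟨x, hx, Finset.mem_filter.2 ⟨Finset.mem_univ _, hz2⟩⟩
    have h1 := hNcut BR hBRcut
    have h2 := Finset.card_le_card hBRsub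
    rw [Finset.card_image_of_injective _ Sum.inl_injective] at h2
    omega

lemma tail_pred {α : Type*} {R : α → α → Prop} :
    ∀ l : List α, l.Chain' R → ∀ z ∈ l.tail, ∃ y, R y z := by
  intro l
  induction l with
  | nil => intro _ z hz; simp at hz
  | cons a rest ih =>
      intro hc z hz
      simp only [List.tail_cons] at hz
      cases rest with
      | nil => simp at hz
      | cons b rest' =>
          rcases List.mem_cons.1 hz with hzb | hz'
          · exact ⟨a, hzb ▸ (List.isChain_cons_cons.1 hc).1⟩
          · exact ih (List.isChain_cons_cons.1 hc).2 z hz'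

lemma rest_inl {l : List (E ⊕ Fin ω)}
    (hc : l.Chain' (fun a b => (star N ρ ω).head a = (star N ρ ω).tail b)) :
    ∀ z ∈ l.tail, ∃ x, z = Sum.inl x ∧ x ∉ ρ := by
  intro z hz
  obtain ⟨y, hy⟩ := tail_pred l hc z hz
  cases z with
  | inl x =>
      refine ⟨x, rfl, ?_⟩
      intro hx
      rw [show (star N ρ ω).tail (Sum.inl x) = none by rw [star_tail_inl, if_pos hx]] at hy
      cases y <;> simp [star] at hy
  | inr j =>
      exfalso
      rw [show (star N ρ ω).tail (Sum.inr j) = none from rfl] at hy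
      cases y <;> simp [star] at hy

lemma chain_lower (e₀ : E) : ∀ (l : List (E ⊕ Fin ω)),
    l.Chain' (fun a b => (star N ρ ω).head a = (star N ρ ω).tail b) →
    (∀ z ∈ l, ∃ x, z = Sum.inl x) →
    (∀ z ∈ l.tail, ∀ x, z = Sum.inl x → x ∉ ρ) →
    (l.map (Sum.elim id (fun _ => e₀))).Chain' (fun d e => N.head d = N.tail e) := by
  intro l
  induction l with
  | nil => intro _ _ _; simp [List.Chain']
  | cons a rest ih =>
      intro hc hinl hnρ
      rw [List.map_cons, List.Chain', List.isChain_cons]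
      constructor
      · intro y hy
        obtain ⟨w, hw, hwy⟩ : ∃ w ∈ rest.head?, Sum.elim id (fun _ => e₀) w = y := by
          cases rest with
          | nil => simp at hy
          | cons b rest' => exact ⟨b, rfl, by simpa using hy⟩
        obtain ⟨xb, hxb⟩ := hinl w (by
          cases rest with
          | nil => simp at hw
          | cons b rest' =>
              have : w = b := by symm; simpa using hw
              subst this
              exact List.mem_cons_of_mem _ (List.mem_cons_self))
        have hbρ : xb ∉ ρ := by
          apply hnρ w ?_ xb hxb
          cases rest with
          | nil => simp at hw
          | cons b rest' =>
              have : w = b := by symm; simpa using hw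
              subst this
              simp
        obtain ⟨xa, hxa⟩ := hinl a (List.mem_cons_self)
        have hlink := (List.isChain_cons.1 hc).1 w hw
        subst hxa
        subst hxb
        rw [star_head_inl, star_tail_inl, if_neg hbρ] at hlink
        have := Option.some_injective _ hlink
        subst hwy
        simpa using this
      · apply ih (List.isChain_cons.1 hc).2
        · intro z hz
          apply hinl z (List.mem_cons_of_mem _ hz)
        · intro z hz x hx
          cases rest with
          | nil => simp at hz
          | cons b rest' =>
              apply hnρ z ?_ x hx
              simp only [List.tail_cons]
              exact List.mem_cons_of_mem _ hz

lemma mem_lower {e₀ : E} {l : List (E ⊕ Fin ω)}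
    (hl : ∀ z ∈ l, ∃ x, z = Sum.inl x) {d : E}
    (hd : d ∈ l.map (Sum.elim id (fun _ => e₀))) : Sum.inl d ∈ l := by
  obtain ⟨z, hz, hzd⟩ := List.mem_map.1 hd
  obtain ⟨x, rfl⟩ := hl z hz
  have : x = d := by simpa using hzd
  exact this ▸ hz

end LNECAux3

theorem statement17 {V E : Type*} [Fintype V] [Fintype E] [DecidableEq V] [DecidableEq E]
    (F : Type*) [Field F] [Fintype F] (N : Network V E) (ω : ℕ) (hω : 1 ≤ ω)
    (t : V) (ht : t ≠ N.s) (hct : ω ≤ N.minCutNode t)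
    (ρ : Finset E) (hρ : ρ ∈ Rset F N ω t) :
    ∃ (Pmsg : Fin ω → List E) (Perr : (e : E) → e ∈ ρ → List E),
      (∀ i : Fin ω, N.PathFrom (Pmsg i) N.s ∧
        (∀ d ∈ (Pmsg i).getLast?, N.head d = t)) ∧
      (∀ (e : E) (he : e ∈ ρ), N.PathFrom (Perr e he) (N.tail e) ∧
        (∀ d ∈ (Perr e he).getLast?, N.head d = t) ∧ e ∈ Perr e he) ∧
      (∀ i j : Fin ω, i ≠ j → ∀ d, d ∈ Pmsg i → d ∉ Pmsg j) ∧
      (∀ (e₁ : E) (h₁ : e₁ ∈ ρ) (e₂ : E) (h₂ : e₂ ∈ ρ), e₁ ≠ e₂ →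
        ∀ d, d ∈ Perr e₁ h₁ → d ∉ Perr e₂ h₂) ∧
      (∀ (i : Fin ω) (e : E) (he : e ∈ ρ), ∀ d, d ∈ Pmsg i → d ∉ Perr e he) := by
  classical
  obtain ⟨hcard, hrank⟩ := hρ
  set δ := N.minCutNode t - ω with hδ
  have hEne : Nonempty E := by
    by_contra hE
    rw [not_nonempty_iff] at hE
    have hcut0 : N.IsCutNodes ∅ ({t} : Finset V) := by
      intro p hp _
      cases p with
      | nil => exact absurd rfl hp.1.1
      | cons a _ => exact (hE.false a).elim
    have h0 : N.minCutNode t ≤ 0 := by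
      rw [Network.minCutNode, Network.minCutNodes]
      exact Nat.sInf_le ⟨∅, hcut0, Finset.card_empty⟩
    omega
  obtain ⟨e₀⟩ := hEne
  have hNcut : ∀ C : Finset E, N.IsCutNodes C ({t} : Finset V) → ω + δ ≤ C.card := by
    intro C hC
    have h1 : N.minCutNode t ≤ C.card := by
      rw [Network.minCutNode, Network.minCutNodes]
      exact Nat.sInf_le ⟨C, hC, rfl⟩
    omega
  have hrk : ∀ D : Finset E, (∀ e ∈ ρ, ∀ q : List E, N.IsPath q → q.head? = some e →
      (∀ x ∈ q.getLast?, N.head x = t) → ∃ x ∈ q, x ∈ D) → δ ≤ D.card := by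
    intro D hD
    have h1 := LNECAux2.rank_le_of_cut (Fc := F) (N := N) (ω := ω) (t := t) (ρ := ρ)
      (D := D) hD
    have h2 := hrank
    omega
  have hts : (some t : Option V) ≠ (LNECAux3.star N ρ ω).s := by
    intro h
    have h2 : (LNECAux3.star N ρ ω).s = none := rfl
    rw [h2] at h
    exact Option.some_ne_none _ h
  have hcutM := LNECAux3.star_cut_bound (N := N) (ρ := ρ) (ω := ω) (t := t) ht hrk hNcut
  obtain ⟨P, hPprop, hPdisj⟩ := LNECAux.menger (LNECAux3.star N ρ ω) hts (k := ω + δ) hcutM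
  have hfe : ∀ j : Fin (ω + δ), ∃ zrr : (E ⊕ Fin ω) × List (E ⊕ Fin ω),
      P j = zrr.1 :: zrr.2 ∧ (LNECAux3.star N ρ ω).tail zrr.1 = none := by
    intro j
    obtain ⟨⟨⟨hne, _⟩, hstart⟩, _⟩ := hPprop j
    cases hp : P j with
    | nil => exact absurd hp hne
    | cons z rest =>
        refine ⟨(z, rest), rfl, ?_⟩
        exact hstart z (by rw [hp]; rfl)
  choose zr hzr1 hzr2 using hfe
  set fe : Fin (ω + δ) → E ⊕ Fin ω := fun j => (zr j).1 with hfe_def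
  have hfeinj : Function.Injective fe := by
    intro j j' hjj
    by_contra hne
    apply hPdisj j j' hne (fe j) ?_ ?_
    · rw [hzr1 j]; exact List.mem_cons_self
    · rw [hjj, hzr1 j']; exact List.mem_cons_self
  set OutS : Finset (E ⊕ Fin ω) :=
    Finset.univ.filter (fun z => (LNECAux3.star N ρ ω).tail z = none) with hOutS
  have hOutEq : OutS = ρ.image Sum.inl ∪ Finset.univ.image Sum.inr := by
    ext z
    cases z with
    | inl e =>
        simp only [hOutS, Finset.mem_filter, Finset.mem_univ, true_and, Finset.mem_union,
          Finset.mem_image, LNECAux3.star_tail_inl]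
        by_cases he : e ∈ ρ
        · simp [he]
        · simp [he]
    | inr i =>
        simp only [hOutS, Finset.mem_filter, Finset.mem_univ, true_and, Finset.mem_union,
          Finset.mem_image]
        constructor
        · intro _; exact Or.inr ⟨i, by simp⟩
        · intro _; rfl
  have hOutcard : OutS.card = δ + ω := by
    rw [hOutEq, Finset.card_union_of_disjoint ?_,
      Finset.card_image_of_injective _ Sum.inl_injective,
      Finset.card_image_of_injective _ Sum.inr_injective, hcard, Finset.card_univ,
      Fintype.card_fin]
    rw [Finset.disjoint_left]
    rintro z hz1 hz2
    obtain ⟨e, _, rfl⟩ := Finset.mem_image.1 hz1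
    obtain ⟨i, _, h⟩ := Finset.mem_image.1 hz2
    exact absurd h (by simp)
  have himg : Finset.univ.image fe = OutS := by
    apply Finset.eq_of_subset_of_card_le
    · intro z hz
      obtain ⟨j, _, rfl⟩ := Finset.mem_image.1 hz
      simp only [hOutS, Finset.mem_filter, Finset.mem_univ, true_and]
      exact hzr2 j
    · rw [hOutcard, Finset.card_image_of_injective _ hfeinj, Finset.card_univ,
        Fintype.card_fin]
      omega
  have hsurj : ∀ z ∈ OutS, ∃ j, fe j = z := by
    intro z hz
    rw [← himg] at hz
    obtain ⟨j, _, h⟩ := Finset.mem_image.1 hz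
    exact ⟨j, h⟩
  have hmsg : ∀ i : Fin ω, ∃ j, fe j = Sum.inr i := by
    intro i
    apply hsurj
    rw [hOutEq]
    exact Finset.mem_union_right _ (Finset.mem_image.2 ⟨i, Finset.mem_univ _, rfl⟩)
  choose jm hjm using hmsg
  have herr : ∀ e : E, e ∈ ρ → ∃ j, fe j = Sum.inl e := by
    intro e he
    apply hsurj
    rw [hOutEq]
    exact Finset.mem_union_left _ (Finset.mem_image.2 ⟨e, he, rfl⟩)
  choose je hje using herr
  -- common facts
  have hchainP : ∀ j, ((zr j).1 :: (zr j).2).Chain'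
      (fun a b => (LNECAux3.star N ρ ω).head a = (LNECAux3.star N ρ ω).tail b) := by
    intro j
    have := (hPprop j).1.1.2
    rwa [hzr1 j] at this
  have hrest_inl : ∀ j, ∀ z ∈ (zr j).2, ∃ x, z = Sum.inl x ∧ x ∉ ρ := by
    intro j z hz
    exact LNECAux3.rest_inl (hchainP j) z (by simpa using hz)
  have hlastP : ∀ j, ∀ z ∈ (P j).getLast?, (LNECAux3.star N ρ ω).head z = some t := by
    intro j
    exact (hPprop j).2
  have hrest_inl' : ∀ j, ∀ z ∈ (zr j).2, ∃ x, z = Sum.inl x := by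
    intro j z hz
    obtain ⟨x, hx, _⟩ := hrest_inl j z hz
    exact ⟨x, hx⟩
  -- the mapped-back lists
  set un : E ⊕ Fin ω → E := Sum.elim id (fun _ => e₀) with hun
  -- last-element fact when rest nonempty
  have hlastrest : ∀ j, (zr j).2 ≠ [] →
      ∀ d ∈ (((zr j).2).map un).getLast?, N.head d = t := by
    intro j hne d hd
    obtain ⟨zl, hzl⟩ : ∃ zl, ((zr j).2).getLast? = some zl :=
      ⟨_, List.getLast?_eq_getLast_of_ne_nil hne⟩
    have hdl : d = un zl := by
      rw [List.getLast?_map, hzl] at hd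
      symm; simpa using hd
    have hzlP : zl ∈ (P j).getLast? := by
      rw [hzr1 j, show ((zr j).1 :: (zr j).2) = [(zr j).1] ++ (zr j).2 from rfl,
        List.getLast?_append_of_ne_nil _ hne]
      exact hzl
    have hhead := hlastP j zl hzlP
    obtain ⟨x, hxz, _⟩ := hrest_inl j zl (List.mem_of_mem_getLast? hzl)
    subst hxz
    rw [LNECAux3.star_head_inl] at hhead
    rw [hdl, hun]
    simpa using hhead
  have hmem_back : ∀ j d, d ∈ (((zr j).2).map un) → Sum.inl d ∈ (zr j).2 := by
    intro j d hd
    exact LNECAux3.mem_lower (hrest_inl' j) hd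
  -- Pmsg facts
  have hmsgfact : ∀ i : Fin ω,
      N.PathFrom (((zr (jm i)).2).map un) N.s ∧
      (∀ d ∈ (((zr (jm i)).2).map un).getLast?, N.head d = t) := by
    intro i
    set j := jm i with hj
    have hz1 : (zr j).1 = Sum.inr i := hjm i
    have hrne : (zr j).2 ≠ [] := by
      intro h0
      have : (P j).getLast? = some (Sum.inr i) := by
        rw [hzr1 j, h0, hz1]
        rfl
      have h3 := hlastP j _ this
      rw [show (LNECAux3.star N ρ ω).head (Sum.inr i) = some N.s from rfl] at h3
      exact ht (Option.some_injective _ h3).symm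
    have hchainrest : ((zr j).2).Chain'
        (fun a b => (LNECAux3.star N ρ ω).head a = (LNECAux3.star N ρ ω).tail b) :=
      (List.isChain_cons.1 (hchainP j)).2
    have hchainN : (((zr j).2).map un).Chain' (fun d e => N.head d = N.tail e) := by
      apply LNECAux3.chain_lower e₀ _ hchainrest
      · intro z hz
        exact hrest_inl' j z hz
      · intro z hz x hx
        obtain ⟨x', hx', hρ'⟩ := hrest_inl j z (List.mem_of_mem_tail hz)
        rw [hx'] at hx
        cases hx
        exact hρ'
    refine ⟨⟨⟨by simpa using hrne, hchainN⟩, ?_⟩, hlastrest j hrne⟩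
    -- start at s
    intro x hx
    obtain ⟨w, rest', hw⟩ : ∃ w rest', (zr j).2 = w :: rest' := by
      cases h : (zr j).2 with
      | nil => exact absurd h hrne
      | cons a b => exact ⟨a, b, rfl⟩
    have hxw : x = un w := by
      rw [hw] at hx
      symm; simpa using hx
    have hlink := (List.isChain_cons.1 (hchainP j)).1 w (by rw [hw]; rfl)
    obtain ⟨xw, hxw', hxwρ⟩ := hrest_inl j w (by rw [hw]; exact List.mem_cons_self)
    subst hxw'
    rw [hz1, LNECAux3.star_tail_inl, if_neg hxwρ,
      show (LNECAux3.star N ρ ω).head (Sum.inr i) = some N.s from rfl] at hlink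
    have h4 : N.s = N.tail xw := Option.some_injective _ hlink
    rw [hxw, hun]
    simpa using h4.symm
  -- Perr facts
  have herrfact : ∀ (e : E) (he : e ∈ ρ),
      N.PathFrom ((P (je e he)).map un) (N.tail e) ∧
      (∀ d ∈ ((P (je e he)).map un).getLast?, N.head d = t) ∧ e ∈ (P (je e he)).map un := by
    intro e he
    set j := je e he with hj
    have hz1 : (zr j).1 = Sum.inl e := hje e he
    have hPj : P j = Sum.inl e :: (zr j).2 := by rw [hzr1 j, hz1]
    have hmapPj : (P j).map un = e :: ((zr j).2).map un := by
      rw [hPj, List.map_cons, hun]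
      rfl
    have hchainrest : ((zr j).2).Chain'
        (fun a b => (LNECAux3.star N ρ ω).head a = (LNECAux3.star N ρ ω).tail b) :=
      (List.isChain_cons.1 (hchainP j)).2
    have hchainN : (((zr j).2).map un).Chain' (fun d e => N.head d = N.tail e) := by
      apply LNECAux3.chain_lower e₀ _ hchainrest
      · intro z hz
        exact hrest_inl' j z hz
      · intro z hz x hx
        obtain ⟨x', hx', hρ'⟩ := hrest_inl j z (List.mem_of_mem_tail hz)
        rw [hx'] at hx
        cases hx
        exact hρ'
    have hchainfull : ((P j).map un).Chain' (fun d e => N.head d = N.tail e) := by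
      rw [hmapPj, List.Chain', List.isChain_cons]
      refine ⟨?_, hchainN⟩
      intro y hy
      obtain ⟨w, rest', hw⟩ : ∃ w rest', (zr j).2 = w :: rest' := by
        cases h : (zr j).2 with
        | nil => rw [h] at hy; simp at hy
        | cons a b => exact ⟨a, b, rfl⟩
      have hyw : y = un w := by
        rw [hw] at hy
        symm; simpa using hy
      have hlink := (List.isChain_cons.1 (hchainP j)).1 w (by rw [hw]; rfl)
      obtain ⟨xw, hxw', hxwρ⟩ := hrest_inl j w (by rw [hw]; exact List.mem_cons_self)
      subst hxw'
      rw [hz1, LNECAux3.star_head_inl, LNECAux3.star_tail_inl, if_neg hxwρ] at hlink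
      rw [hyw, hun]
      simpa using hlink
    refine ⟨⟨⟨by rw [hmapPj]; simp, hchainfull⟩, ?_⟩, ?_, ?_⟩
    · intro x hx
      rw [hmapPj] at hx
      have : x = e := by symm; simpa using hx
      rw [this]
    · -- last
      cases hrest : (zr j).2 with
      | nil =>
          intro d hd
          rw [hmapPj, hrest] at hd
          have hde : d = e := by symm; simpa using hd
          have : (P j).getLast? = some (Sum.inl e) := by
            rw [hPj, hrest]
            rfl
          have := hlastP j _ this
          rw [LNECAux3.star_head_inl] at this
          rw [hde]
          simpa using this
      | cons a b =>
          intro d hd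
          have hrne : (zr j).2 ≠ [] := by rw [hrest]; simp
          apply hlastrest j hrne d
          rw [hmapPj] at hd
          rwa [show (e :: ((zr j).2).map un) = [e] ++ ((zr j).2).map un from rfl,
            List.getLast?_append_of_ne_nil _ (by rw [hrest]; simp)] at hd
    · rw [hmapPj]
      exact List.mem_cons_self
  have hmem_back_full : ∀ (e : E) (he : e ∈ ρ) (d : E),
      d ∈ (P (je e he)).map un → Sum.inl d ∈ P (je e he) := by
    intro e he d hd
    apply LNECAux3.mem_lower ?_ hd
    intro z hz
    rw [hzr1 (je e he)] at hz
    rcases List.mem_cons.1 hz with h | h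
    · refine ⟨e, ?_⟩
      rw [h]
      exact hje e he
    · exact hrest_inl' (je e he) z h
  refine ⟨fun i => ((zr (jm i)).2).map un, fun e he => (P (je e he)).map un,
    fun i => hmsgfact i, fun e he => herrfact e he, ?_, ?_, ?_⟩
  · -- msg vs msg
    intro i i' hii d hd hd'
    have hjne : jm i ≠ jm i' := by
      intro h
      apply hii
      have := (hjm i).symm.trans (h ▸ hjm i')
      exact Sum.inr_injective this
    have h1 : Sum.inl d ∈ P (jm i) := by
      rw [hzr1 (jm i)]
      exact List.mem_cons_of_mem _ (hmem_back (jm i) d hd)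
    have h2 : Sum.inl d ∈ P (jm i') := by
      rw [hzr1 (jm i')]
      exact List.mem_cons_of_mem _ (hmem_back (jm i') d hd')
    exact hPdisj (jm i) (jm i') hjne (Sum.inl d) h1 h2
  · -- err vs err
    intro e₁ h₁ e₂ h₂ hee d hd hd'
    have hjne : je e₁ h₁ ≠ je e₂ h₂ := by
      intro h
      apply hee
      have := (hje e₁ h₁).symm.trans (h ▸ hje e₂ h₂)
      exact Sum.inl_injective this
    exact hPdisj _ _ hjne (Sum.inl d) (hmem_back_full e₁ h₁ d hd)
      (hmem_back_full e₂ h₂ d hd')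
  · -- msg vs err
    intro i e he d hd hd'
    have hjne : jm i ≠ je e he := by
      intro h
      have := (hjm i).symm.trans (h ▸ hje e he)
      simp at this
    have h1 : Sum.inl d ∈ P (jm i) := by
      rw [hzr1 (jm i)]
      exact List.mem_cons_of_mem _ (hmem_back (jm i) d hd)
    exact hPdisj _ _ hjne (Sum.inl d) h1 (hmem_back_full e he d hd')
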